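/- arXiv:1208.6451 — 7 statements merged into one kernel-verified Lean document; each statement's English description precedes it below -/
import Mathlib

section
/- For n ≥ 2 and any vector (x_1,…,x_{n-1},0) in {0,1}^n: if (x_1,…,x_{n-1},0) is the alternating vector ending (…,1,0,1,0) then Φ_n(x_1,…,x_{n-1},0) = (1,1,…,1); otherwise Φ_n(x_1,…,x_{n-1},0) = (Φ_{n-1}(x_1,…,x_{n-1}), 0). -/
/-- The prefix `(x₁,…,x_m)` (1-indexed) of `x ∈ {0,1}ⁿ` is alternating:
consecutive entries differ. -/
def AltPrefix (n : ℕ) (x : Fin n → Bool) (m : ℕ) : Prop :=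
  ∀ j : ℕ, j + 1 < m → ∀ hn : j + 1 < n,
    x ⟨j, Nat.lt_of_succ_lt hn⟩ ≠ x ⟨j + 1, hn⟩

instance (n : ℕ) (x : Fin n → Bool) : DecidablePred (AltPrefix n x) := fun m =>
  decidable_of_iff
    (∀ j ∈ Finset.range n, j + 1 < m → ∀ hn : j + 1 < n,
      x ⟨j, Nat.lt_of_succ_lt hn⟩ ≠ x ⟨j + 1, hn⟩)
    (by
      constructor
      · intro h j hj hn
        exact h j (Finset.mem_range.mpr (Nat.lt_of_succ_lt hn)) hj hn
      · intro h j _ hj hn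
        exact h j hj hn)

/-- The largest `m ≤ n` such that the prefix `(x₁,…,x_m)` is alternating. -/
def mIdx (n : ℕ) (x : Fin n → Bool) : ℕ :=
  Nat.findGreatest (AltPrefix n x) n

/-- The map `Φₙ : {0,1}ⁿ → {0,1}ⁿ`: with `m` the largest index such that
`(x₁,…,x_m)` is alternating, `yᵢ = 1 - x_m` for `i ≤ m` and `yᵢ = xᵢ` for `i > m`. -/
def Phi (n : ℕ) (x : Fin n → Bool) : Fin n → Bool :=
  fun i =>
    if _h : (i : ℕ) < mIdx n x then
      ! x ⟨mIdx n x - 1, by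
        have h2 : mIdx n x ≤ n := Nat.findGreatest_le n
        omega⟩
    else x i

/-- The alternating vector `(…,1,0,1,0)`: `x_j = 1` iff `j ≢ n (mod 2)` (1-indexed). -/
def altEnd0 (n : ℕ) : Fin n → Bool := fun i => decide (((i : ℕ) + 1) % 2 ≠ n % 2)

/-- The alternating vector `(…,0,1,0,1)`: `x_j = 1` iff `j ≡ n (mod 2)` (1-indexed). -/
def altEnd1 (n : ℕ) : Fin n → Bool := fun i => decide (((i : ℕ) + 1) % 2 = n % 2)

/-- The bit `c_j` (0-indexed `j`): XOR of consecutive bits `x_j, x_{j+1}`,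
and for the last position the bit itself. -/
def cbit (n : ℕ) (x : Fin n → Bool) (j : Fin n) : Bool :=
  if h : (j : ℕ) + 1 < n then xor (x j) (x ⟨(j : ℕ) + 1, h⟩) else x j

/-- The map `rₙ(x) = Σ_{j=1}^n c_j 2^{j-1}`. -/
def rmap (n : ℕ) (x : Fin n → Bool) : ℕ :=
  ∑ j : Fin n, (if cbit n x j then 1 else 0) * 2 ^ (j : ℕ)

/-- The recursively defined weights `w_{n,i,j}` (all indices 1-based; values for
indices outside `1 ≤ i, j ≤ n` are irrelevant junk). -/
def wgt : ℕ → ℕ → ℕ → ℤ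
  | 0, _, _ => 0
  | 1, _, _ => -1
  | (n+2), i, j =>
    if i = n + 2 then
      (if j = n + 2 then (n : ℤ)
       else if j % 2 = (n + 2) % 2 then -1 else 1)
    else if i = n + 1 then
      (if j = n + 2 then -1
       else if j = n + 1 then wgt (n+1) (n+1) j + 1
       else wgt (n+1) (n+1) j)
    else
      (if j = n + 2 then -1
       else if j = n + 1 then wgt (n+1) i j
       else wgt (n+1) i j + wgt n i j)

/-- The recursively defined thresholds `θ_{n,i}`. -/
def thr : ℕ → ℕ → ℤ
  | 0, _ => 0
  | 1, _ => 0
  | (n+2), i =>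
    if i = n + 2 then (((n + 2) / 2 : ℕ) : ℤ)
    else if i = n + 1 then thr (n+1) (n+1)
    else thr (n+1) i + thr n i - 1


lemma altPrefix_altEnd0 (n m : ℕ) : AltPrefix n (altEnd0 n) m := by
  intro j _ hn
  simp only [altEnd0, ne_eq, decide_eq_decide]
  omega

lemma alt_full_eq (n : ℕ) (hn : 1 ≤ n) (x : Fin n → Bool)
    (hlast : x ⟨n - 1, by omega⟩ = false) (halt : AltPrefix n x n) :
    x = altEnd0 n := by
  have key : ∀ k, k ≤ n - 1 →
      x ⟨n - 1 - k, by omega⟩ = decide ((n - 1 - k + 1) % 2 ≠ n % 2) := by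
    intro k
    induction k with
    | zero =>
      intro _
      have e : n - 1 - 0 + 1 = n := by omega
      rw [e]
      simpa using hlast
    | succ k ih =>
      intro hk
      have ih' := ih (by omega)
      have h1 := halt (n - 1 - (k + 1)) (by omega) (by omega)
      have e : (⟨n - 1 - (k + 1) + 1, by omega⟩ : Fin n) = ⟨n - 1 - k, by omega⟩ := by
        apply Fin.ext; simp; omega
      rw [e] at h1
      have h2 : x ⟨n - 1 - (k + 1), by omega⟩ = ! x ⟨n - 1 - k, by omega⟩ := by
        revert h1; cases x ⟨n - 1 - (k + 1), by omega⟩ <;> cases x ⟨n - 1 - k, by omega⟩ <;> simp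
      rw [h2, ih']
      rw [← decide_not]
      simp only [decide_eq_decide]
      omega
  funext i
  have hi : (n : ℕ) - 1 - ((n - 1) - (i : ℕ)) = i := by omega
  have := key ((n - 1) - (i : ℕ)) (by omega)
  have e : (⟨n - 1 - ((n-1) - (i:ℕ)), by omega⟩ : Fin n) = i := by
    apply Fin.ext; simp [hi]
  rw [e] at this
  rw [this]
  simp [altEnd0, hi]

lemma altPrefix_restrict_iff (n : ℕ) (x : Fin n → Bool) (m : ℕ) (hm : m ≤ n - 1) (hn : 2 ≤ n) :
    AltPrefix (n - 1) (fun j : Fin (n - 1) => x (Fin.castLE (by omega) j)) m ↔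
      AltPrefix n x m := by
  constructor
  · intro h j hj hjn
    have := h j hj (by omega)
    exact this
  · intro h j hj hjn
    exact h j hj (by omega)

/-- For `n ≥ 2` and a vector ending in `0`: if it is the alternating vector
`(…,1,0,1,0)` then `Φₙ` sends it to `(1,…,1)`; otherwise `Φₙ` acts as
`(Φ_{n-1}(x₁,…,x_{n-1}), 0)`. -/
theorem Phi_last_zero (n : ℕ) (hn : 2 ≤ n) (x : Fin n → Bool)
    (hlast : x ⟨n - 1, by omega⟩ = false) :
    (x = altEnd0 n → Phi n x = fun _ => true) ∧
    (x ≠ altEnd0 n →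
      (∀ i : Fin (n - 1),
        Phi n x (Fin.castLE (by omega) i) =
          Phi (n - 1) (fun j : Fin (n - 1) => x (Fin.castLE (by omega) j)) i) ∧
      Phi n x ⟨n - 1, by omega⟩ = false) := by
  constructor
  · intro hx
    subst hx
    have hm : mIdx n (altEnd0 n) = n :=
      le_antisymm (Nat.findGreatest_le n)
        (Nat.le_findGreatest le_rfl (altPrefix_altEnd0 n n))
    funext i
    simp only [Phi, hm]
    rw [dif_pos i.isLt]
    have e : (n - 1 : ℕ) + 1 = n := by omega
    simp [altEnd0, e]
  · intro hx
    have hmle : mIdx n x ≤ n := Nat.findGreatest_le n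
    have hm : mIdx n x ≤ n - 1 := by
      rcases Nat.lt_or_ge (mIdx n x) n with h | h
      · omega
      · exfalso
        have hmn : mIdx n x = n := by omega
        have halt : AltPrefix n x n := Nat.findGreatest_of_ne_zero hmn (by omega)
        exact hx (alt_full_eq n (by omega) x hlast halt)
    set x' : Fin (n-1) → Bool := fun j : Fin (n - 1) => x (Fin.castLE (by omega) j) with hx'
    have hrec : mIdx (n - 1) x' = mIdx n x := by
      apply le_antisymm
      · rcases Nat.eq_zero_or_pos (mIdx (n-1) x') with h0 | h0
        · omega
        · have hsp : AltPrefix (n-1) x' (mIdx (n-1) x') :=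
            Nat.findGreatest_of_ne_zero rfl (by omega)
          have hle : mIdx (n-1) x' ≤ n - 1 := Nat.findGreatest_le (n-1)
          have := (altPrefix_restrict_iff n x _ hle hn).mp hsp
          exact Nat.le_findGreatest (by omega) this
      · rcases Nat.eq_zero_or_pos (mIdx n x) with h0 | h0
        · omega
        · have hsp : AltPrefix n x (mIdx n x) :=
            Nat.findGreatest_of_ne_zero rfl (by omega)
          have := (altPrefix_restrict_iff n x _ hm hn).mpr hsp
          exact Nat.le_findGreatest hm this
    refine ⟨fun i => ?_, ?_⟩
    · simp only [Phi, hrec]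
      rfl
    · simp only [Phi]
      rw [dif_neg (by omega)]
      exact hlast
end

section
/- The 2^n vectors Φ_n^t(0,0,…,0), for t = 0, 1, …, 2^n − 1, are pairwise distinct. -/
-- auxiliary lemmas

lemma mIdx_le (n : ℕ) (x : Fin n → Bool) : mIdx n x ≤ n := Nat.findGreatest_le n

lemma mIdx_pos (n : ℕ) (x : Fin n → Bool) (hn : 0 < n) : 0 < mIdx n x :=
  Nat.le_findGreatest hn (fun j hj _ => absurd hj (by omega))

lemma altPrefix_mIdx (n : ℕ) (x : Fin n → Bool) : AltPrefix n x (mIdx n x) :=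
  Nat.findGreatest_spec (Nat.zero_le n) (fun j hj _ => absurd hj (by omega))

lemma cbit_of_lt (n : ℕ) (x : Fin n → Bool) (j : Fin n) (h : (j:ℕ) + 1 < mIdx n x) :
    cbit n x j = true := by
  have hn : (j:ℕ) + 1 < n := lt_of_lt_of_le h (mIdx_le n x)
  have hne := altPrefix_mIdx n x j h hn
  simp only [cbit, dif_pos hn]
  revert hne
  cases x j <;> cases x ⟨(j:ℕ)+1, hn⟩ <;> simp

lemma cbit_at_mIdx (n : ℕ) (x : Fin n → Bool) (hlt : mIdx n x < n) (k : ℕ)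
    (hk : mIdx n x = k + 1) (hkn : k < n) : cbit n x ⟨k, hkn⟩ = false := by
  have hng : ¬ AltPrefix n x (mIdx n x + 1) :=
    Nat.findGreatest_is_greatest (n := n) (Nat.lt_succ_self _) (by show mIdx n x + 1 ≤ n; omega)
  simp only [AltPrefix] at hng
  push_neg at hng
  obtain ⟨j, hj1, hjn, hx⟩ := hng
  have hje : j = k := by
    by_contra hne
    have hlt' : j + 1 < mIdx n x := by omega
    exact (altPrefix_mIdx n x j hlt' hjn) hx
  subst hje
  have h2 : j + 1 < n := by omega
  simp only [cbit, dif_pos h2]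
  have hx' : x ⟨j, hkn⟩ = x ⟨j+1, h2⟩ := hx
  rw [hx']
  simp

lemma cbit_Phi (n : ℕ) (hn : 0 < n) (x : Fin n → Bool) (j : Fin n) :
    cbit n (Phi n x) j = if (j:ℕ) < mIdx n x then !(cbit n x j) else cbit n x j := by
  have hml := mIdx_le n x
  have hmp := mIdx_pos n x hn
  by_cases h1 : (j:ℕ) + 1 < n
  · by_cases h2 : (j:ℕ) + 1 < mIdx n x
    · have hj : (j:ℕ) < mIdx n x := by omega
      rw [if_pos hj, cbit_of_lt n x j h2]
      simp only [cbit, dif_pos h1, Phi, dif_pos hj, dif_pos h2]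
      simp
    · by_cases h3 : (j:ℕ) < mIdx n x
      · -- j + 1 = mIdx n x
        have he : (j:ℕ) + 1 = mIdx n x := by omega
        rw [if_pos h3]
        simp only [cbit, dif_pos h1, Phi, dif_pos h3, dif_neg h2]
        have hidx : (⟨mIdx n x - 1, by omega⟩ : Fin n) = j := by
          apply Fin.ext; simp; omega
        rw [hidx]
        cases x j <;> cases x ⟨(j:ℕ)+1, h1⟩ <;> simp
      · rw [if_neg h3]
        simp only [cbit, dif_pos h1, Phi, dif_neg h3, dif_neg h2]
  · by_cases h3 : (j:ℕ) < mIdx n x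
    · have he : mIdx n x = n := by omega
      rw [if_pos h3]
      simp only [cbit, dif_neg h1, Phi, dif_pos h3]
      have hidx : (⟨mIdx n x - 1, by omega⟩ : Fin n) = j := by
        apply Fin.ext; simp; omega
      rw [hidx]
    · rw [if_neg h3]
      simp only [cbit, dif_neg h1, Phi, dif_neg h3]

def cnat (n : ℕ) (x : Fin n → Bool) (j : ℕ) : ℕ :=
  if h : j < n then (if cbit n x ⟨j, h⟩ then 1 else 0) else 0

lemma cnat_le_one (n : ℕ) (x : Fin n → Bool) (j : ℕ) : cnat n x j ≤ 1 := by
  unfold cnat; split_ifs <;> simp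

lemma rmap_eq (n : ℕ) (x : Fin n → Bool) :
    rmap n x = ∑ j ∈ Finset.range n, cnat n x j * 2 ^ j := by
  rw [rmap, ← Fin.sum_univ_eq_sum_range (fun j => cnat n x j * 2 ^ j) n]
  refine Finset.sum_congr rfl fun j _ => ?_
  simp [cnat, j.isLt]

lemma two_pow_sum (k : ℕ) : ∑ j ∈ Finset.range k, 2 ^ j = 2 ^ k - 1 := by
  induction k with
  | zero => simp
  | succ k ih =>
    rw [Finset.sum_range_succ, ih, pow_succ]
    have : 1 ≤ 2 ^ k := Nat.one_le_two_pow
    omega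

lemma rmap_lt (n : ℕ) (x : Fin n → Bool) : rmap n x < 2 ^ n := by
  rw [rmap_eq]
  have h1 : ∑ j ∈ Finset.range n, cnat n x j * 2 ^ j ≤ ∑ j ∈ Finset.range n, 2 ^ j :=
    Finset.sum_le_sum fun j _ => by
      have := cnat_le_one n x j; nlinarith [Nat.one_le_two_pow (n := j)]
  rw [two_pow_sum] at h1
  have : 1 ≤ 2 ^ n := Nat.one_le_two_pow
  omega

lemma rmap_Phi (n : ℕ) (hn : 0 < n) (x : Fin n → Bool) :
    rmap n (Phi n x) = (rmap n x + 1) % 2 ^ n := by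
  have hml := mIdx_le n x
  have hmp := mIdx_pos n x hn
  obtain ⟨k, hk⟩ : ∃ k, mIdx n x = k + 1 := ⟨mIdx n x - 1, by omega⟩
  have hkn : k < n := by omega
  have hpk : 1 ≤ 2 ^ k := Nat.one_le_two_pow
  -- tail sum
  have htail : ∑ j ∈ Finset.Ico (k+1) n, cnat n (Phi n x) j * 2 ^ j
      = ∑ j ∈ Finset.Ico (k+1) n, cnat n x j * 2 ^ j := by
    refine Finset.sum_congr rfl fun j hj => ?_
    obtain ⟨hj1, hj2⟩ := Finset.mem_Ico.mp hj
    simp only [cnat, dif_pos hj2]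
    rw [cbit_Phi n hn x ⟨j, hj2⟩, if_neg (show ¬ j < mIdx n x by omega)]
  have hheadx : ∑ j ∈ Finset.range (k+1), cnat n x j * 2 ^ j
      = (2 ^ k - 1) + (if cbit n x ⟨k, hkn⟩ then 1 else 0) * 2 ^ k := by
    rw [Finset.sum_range_succ]
    congr 1
    · rw [← two_pow_sum k]
      refine Finset.sum_congr rfl fun j hj => ?_
      have hj' := Finset.mem_range.mp hj
      have hjn : j < n := by omega
      simp only [cnat, dif_pos hjn]
      rw [cbit_of_lt n x ⟨j, hjn⟩ (show j + 1 < mIdx n x by omega)]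
      simp
    · simp only [cnat, dif_pos hkn]
  have hheady : ∑ j ∈ Finset.range (k+1), cnat n (Phi n x) j * 2 ^ j
      = (if cbit n x ⟨k, hkn⟩ then 0 else 1) * 2 ^ k := by
    rw [Finset.sum_range_succ]
    have h0 : ∀ j ∈ Finset.range k, cnat n (Phi n x) j * 2 ^ j = 0 := by
      intro j hj
      have hj' := Finset.mem_range.mp hj
      have hjn : j < n := by omega
      simp only [cnat, dif_pos hjn]
      rw [cbit_Phi n hn x ⟨j, hjn⟩, if_pos (show j < mIdx n x by omega),
        cbit_of_lt n x ⟨j, hjn⟩ (show j + 1 < mIdx n x by omega)]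
      simp
    rw [Finset.sum_eq_zero h0, zero_add]
    simp only [cnat, dif_pos hkn]
    rw [cbit_Phi n hn x ⟨k, hkn⟩, if_pos (show k < mIdx n x by omega)]
    cases cbit n x ⟨k, hkn⟩ <;> simp
  have hx2 : rmap n x = (2 ^ k - 1) + (if cbit n x ⟨k, hkn⟩ then 1 else 0) * 2 ^ k
      + ∑ j ∈ Finset.Ico (k+1) n, cnat n x j * 2 ^ j := by
    rw [rmap_eq, ← Finset.sum_range_add_sum_Ico _ (show k+1 ≤ n by omega), hheadx]
  have hy2 : rmap n (Phi n x) = (if cbit n x ⟨k, hkn⟩ then 0 else 1) * 2 ^ k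
      + ∑ j ∈ Finset.Ico (k+1) n, cnat n x j * 2 ^ j := by
    rw [rmap_eq, ← Finset.sum_range_add_sum_Ico _ (show k+1 ≤ n by omega), hheady, htail]
  by_cases hmn : mIdx n x < n
  · have hBf : cbit n x ⟨k, hkn⟩ = false := cbit_at_mIdx n x hmn k hk hkn
    rw [hBf] at hx2 hy2
    simp only [if_neg (by simp : ¬ (false = true)), one_mul, zero_mul] at hx2 hy2
    have hylt := rmap_lt n (Phi n x)
    rw [Nat.mod_eq_of_lt (by omega)]
    omega
  · have hne : n = k + 1 := by omega
    have hT : ∑ j ∈ Finset.Ico (k+1) n, cnat n x j * 2 ^ j = 0 := by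
      have he : Finset.Ico (k+1) n = ∅ := by rw [hne, Finset.Ico_self]
      rw [he, Finset.sum_empty]
    have h2n : 2 ^ n = 2 ^ k * 2 := by rw [hne, pow_succ]
    rw [hT] at hx2 hy2
    cases hBc : cbit n x ⟨k, hkn⟩
    · rw [hBc] at hx2 hy2
      simp at hx2 hy2
      rw [Nat.mod_eq_of_lt (by omega)]
      omega
    · rw [hBc] at hx2 hy2
      simp at hx2 hy2
      rw [show rmap n x + 1 = 2 ^ n by omega, Nat.mod_self]
      omega

lemma rmap_zero (n : ℕ) : rmap n (fun _ => false) = 0 := by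
  rw [rmap_eq]
  refine Finset.sum_eq_zero fun j hj => ?_
  have hjn := Finset.mem_range.mp hj
  simp [cnat, cbit, hjn]

lemma rmap_iterate (n : ℕ) (hn : 0 < n) (t : ℕ) :
    rmap n ((Phi n)^[t] (fun _ => false)) = t % 2 ^ n := by
  induction t with
  | zero => simp [rmap_zero]
  | succ t ih =>
    rw [Function.iterate_succ_apply', rmap_Phi n hn, ih, Nat.mod_add_mod]

/-- The `2ⁿ` vectors `Φₙᵗ(0,…,0)`, `t = 0,…,2ⁿ-1`, are pairwise distinct. -/
theorem Phi_orbit_distinct (n : ℕ) (hn : 0 < n) :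
    ∀ s t : ℕ, s < 2 ^ n → t < 2 ^ n →
      (Phi n)^[s] (fun _ => false) = (Phi n)^[t] (fun _ => false) → s = t := by
  intro s t hs ht h
  have := congrArg (rmap n) h
  rw [rmap_iterate n hn, rmap_iterate n hn, Nat.mod_eq_of_lt hs, Nat.mod_eq_of_lt ht] at this
  exact this
end

section
/- Φ_n^{2^n - 1}(0,0,…,0) is the alternating vector (…,0,1,0,1), i.e. the vector x with x_i = 1 exactly when n - i is even (so x_n = 1, x_{n-1} = 0, etc.), and consequently Φ_n^{2^n}(0,…,0) = (0,…,0). -/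
namespace PhiAux

/-- Parity-sum of bits `i..n-1` of `k`. -/
def P (n k i : ℕ) : ℕ := ∑ j ∈ Finset.Ico i n, k / 2 ^ j % 2

/-- Decode `k` into the vector whose Gray-code value is `k`. -/
def dec (n k : ℕ) : Fin n → Bool := fun i => decide (P n k (i : ℕ) % 2 = 1)

lemma P_step (n k i : ℕ) (h : i < n) :
    P n k i = k / 2 ^ i % 2 + P n k (i + 1) :=
  Finset.sum_eq_sum_Ico_succ_bot h _

lemma dec_zero (n : ℕ) : dec n 0 = fun _ => false := by
  funext i
  simp [dec, P]

lemma dec_adj (n k j : ℕ) (h : j + 1 < n) :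
    (dec n k ⟨j, Nat.lt_of_succ_lt h⟩ ≠ dec n k ⟨j + 1, h⟩) ↔ k / 2 ^ j % 2 = 1 := by
  have hP := P_step n k j (Nat.lt_of_succ_lt h)
  have h2 : k / 2 ^ j % 2 = 0 ∨ k / 2 ^ j % 2 = 1 := Nat.mod_two_eq_zero_or_one _
  simp only [dec, ne_eq, decide_eq_decide]
  omega

lemma altPrefix_dec (n k m : ℕ) :
    AltPrefix n (dec n k) m ↔ ∀ j : ℕ, j + 1 < m → j + 1 < n → k / 2 ^ j % 2 = 1 := by
  constructor
  · intro h j hj hn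
    exact (dec_adj n k j hn).mp (h j hj hn)
  · intro h j hj hn
    exact (dec_adj n k j hn).mpr (h j hj hn)

/-- If bits `0..t-1` of `k` are 1 and bit `t` is 0, with `t < n`, then `mIdx = t+1`. -/
lemma mIdx_dec (n k t : ℕ) (htn : t < n)
    (h1 : ∀ j, j < t → k / 2 ^ j % 2 = 1) (h0 : k / 2 ^ t % 2 = 0) :
    mIdx n (dec n k) = t + 1 := by
  rw [mIdx, Nat.findGreatest_eq_iff]
  refine ⟨htn, fun _ => ?_, fun m hm hmn hP => ?_⟩
  · rw [altPrefix_dec]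
    intro j hj _
    exact h1 j (by omega)
  · rw [altPrefix_dec] at hP
    have := hP t hm (by omega)
    omega

lemma mod_pow_all_ones (k : ℕ) :
    ∀ t, (∀ j, j < t → k / 2 ^ j % 2 = 1) → k % 2 ^ t = 2 ^ t - 1 := by
  intro t
  induction t with
  | zero => intro _; simp only [pow_zero]; omega
  | succ t ih =>
    intro h
    have h1 := ih (fun j hj => h j (Nat.lt_succ_of_lt hj))
    have h2 : k % 2 ^ (t + 1) = k % 2 ^ t + 2 ^ t * (k / 2 ^ t % 2) := Nat.mod_pow_succ
    have h3 := h t (Nat.lt_succ_self t)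
    have h4 : 0 < 2 ^ t := Nat.pow_pos (by norm_num)
    have h5 : 2 ^ (t + 1) = 2 * 2 ^ t := by rw [pow_succ]; ring
    rw [h3, Nat.mul_one] at h2
    omega

/-- Key divisibility facts about `k+1` when `k` has exactly `t` trailing ones. -/
lemma succ_div_eq (q s : ℕ) (hq : q % 2 = 0) (hs : 1 ≤ s) :
    (q + 1) / 2 ^ s = q / 2 ^ s := by
  obtain ⟨s, rfl⟩ := Nat.exists_eq_add_of_le hs
  have h2 : (q + 1) / 2 = q / 2 := by omega
  rw [pow_add, pow_one, ← Nat.div_div_eq_div_mul, ← Nat.div_div_eq_div_mul, h2]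

section Main

variable {n k t : ℕ}

/-- Main step: one application of `Phi` increments the Gray code value. -/
lemma phi_dec (hn : 0 < n) (hk : k < 2 ^ n - 1) :
    Phi n (dec n k) = dec n (k + 1) := by
  -- t = least zero bit of k
  have hex : ∃ j, k / 2 ^ j % 2 = 0 := by
    refine ⟨n, ?_⟩
    have : k / 2 ^ n = 0 := Nat.div_eq_of_lt (by omega)
    simp [this]
  set t := Nat.find hex with ht
  have h0 : k / 2 ^ t % 2 = 0 := Nat.find_spec hex
  have h1 : ∀ j, j < t → k / 2 ^ j % 2 = 1 := by
    intro j hj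
    have := Nat.find_min hex hj
    omega
  have htn : t < n := by
    by_contra hc
    have := mod_pow_all_ones k n (fun j hj => h1 j (by omega))
    have h2n : k < 2 ^ n := by omega
    have : k % 2 ^ n = k := Nat.mod_eq_of_lt h2n
    have h4 : 0 < 2 ^ n := Nat.pow_pos (by norm_num)
    omega
  -- structure of k and k+1
  have hmod : k % 2 ^ t = 2 ^ t - 1 := mod_pow_all_ones k t h1
  set q := k / 2 ^ t with hq
  have hqe : q % 2 = 0 := h0
  have hpt : 0 < 2 ^ t := Nat.pow_pos (by norm_num)
  have hk1 : k + 1 = 2 ^ t * (q + 1) := by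
    have h := Nat.div_add_mod k (2 ^ t)
    rw [← hq] at h
    have h2 : 2 ^ t * (q + 1) = 2 ^ t * q + 2 ^ t := by ring
    omega
  have hdiv1 : (k + 1) / 2 ^ t = q + 1 := by
    rw [hk1, Nat.mul_div_cancel_left _ hpt]
  -- bits of k+1
  have hbit_lt : ∀ j, j < t → (k + 1) / 2 ^ j % 2 = 0 := by
    intro j hj
    have hd : 2 ^ (j + 1) ∣ k + 1 := by
      rw [hk1]; exact Dvd.dvd.mul_right (pow_dvd_pow 2 hj) _
    obtain ⟨c, hc⟩ := hd
    have hc2 : k + 1 = 2 ^ j * (2 * c) := by rw [hc, pow_succ]; ring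
    have : (k + 1) / 2 ^ j = 2 * c := by
      rw [hc2, Nat.mul_div_cancel_left _ (Nat.pow_pos (by norm_num))]
    omega
  have hbit_t : (k + 1) / 2 ^ t % 2 = 1 := by rw [hdiv1]; omega
  have hbit_gt : ∀ j, t < j → (k + 1) / 2 ^ j % 2 = k / 2 ^ j % 2 := by
    intro j hj
    have hpow : (2 : ℕ) ^ j = 2 ^ t * 2 ^ (j - t) := by
      rw [← pow_add]; congr 1; omega
    have e1 : (k + 1) / 2 ^ j = (q + 1) / 2 ^ (j - t) := by
      rw [hpow, ← Nat.div_div_eq_div_mul, hdiv1]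
    have e2 : k / 2 ^ j = q / 2 ^ (j - t) := by
      rw [hpow, ← Nat.div_div_eq_div_mul, ← hq]
    rw [e1, e2, succ_div_eq q (j - t) hqe (by omega)]
  -- P comparisons
  have hPtail : ∀ i, t + 1 ≤ i → P n (k + 1) i = P n k i := by
    intro i hi
    exact Finset.sum_congr rfl (fun j hj => by
      have := (Finset.mem_Ico.mp hj).1
      exact hbit_gt j (by omega))
  have hPt : P n k t = P n k (t + 1) := by
    rw [P_step n k t htn]; omega
  have hPk1 : ∀ i, i ≤ t → P n (k + 1) i = 1 + P n k (t + 1) := by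
    have base : P n (k + 1) t = 1 + P n k (t + 1) := by
      rw [P_step n (k + 1) t htn, hbit_t, hPtail (t + 1) le_rfl]
    intro i hi
    obtain ⟨d, hd⟩ := Nat.exists_eq_add_of_le hi
    clear hi
    induction d generalizing i with
    | zero => rw [show i = t by omega]; exact base
    | succ d ih =>
      have hitn : i < n := by omega
      rw [P_step n (k + 1) i hitn, hbit_lt i (by omega), ih (i + 1) (by omega)]
      omega
  -- now compute Phi
  have hm : mIdx n (dec n k) = t + 1 := mIdx_dec n k t htn h1 h0
  funext i
  simp only [Phi, hm]
  by_cases hi : (i : ℕ) < t + 1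
  · rw [dif_pos hi]
    have : dec n k ⟨t + 1 - 1, by omega⟩ = decide (P n k (t + 1) % 2 = 1) := by
      simp only [dec]
      congr 1
      rw [show t + 1 - 1 = t from rfl, hPt]
    rw [this]
    have : dec n (k + 1) i = decide ((1 + P n k (t + 1)) % 2 = 1) := by
      simp only [dec]
      congr 1
      rw [hPk1 (i : ℕ) (by omega)]
    rw [this]
    rcases Nat.mod_two_eq_zero_or_one (P n k (t + 1)) with h | h <;>
      simp [h, Nat.add_mod]
  · rw [dif_neg hi]
    simp only [dec]
    congr 1
    rw [hPtail (i : ℕ) (by omega)]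

end Main

lemma dec_top (n : ℕ) : dec n (2 ^ n - 1) = altEnd1 n := by
  funext i
  have hterm : ∀ j, j < n → (2 ^ n - 1) / 2 ^ j % 2 = 1 := by
    intro j hj
    have hpj : 0 < 2 ^ j := Nat.pow_pos (by norm_num)
    have hmul : 2 ^ j * 2 ^ (n - j) = 2 ^ n := by
      rw [← pow_add]; congr 1; omega
    have hsub : 2 ^ j * (2 ^ (n - j) - 1) = 2 ^ j * 2 ^ (n - j) - 2 ^ j := by
      rw [Nat.mul_sub, Nat.mul_one]
    have hpn : 0 < 2 ^ n := Nat.pow_pos (by norm_num)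
    have hpnj : 0 < 2 ^ (n - j) := Nat.pow_pos (by norm_num)
    have hle : 2 ^ j ≤ 2 ^ n := Nat.pow_le_pow_right (by norm_num) (by omega)
    have heq : 2 ^ n - 1 = 2 ^ j * (2 ^ (n - j) - 1) + (2 ^ j - 1) := by omega
    have h0div : (2 ^ j - 1) / 2 ^ j = 0 := Nat.div_eq_of_lt (by omega)
    have h : (2 ^ n - 1) / 2 ^ j = 2 ^ (n - j) - 1 := by
      rw [heq, Nat.mul_add_div hpj, h0div, Nat.add_zero]
    have hm2 : 2 ^ (n - j) % 2 = 0 := by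
      rw [show n - j = (n - j - 1) + 1 by omega, pow_succ, Nat.mul_mod_left]
    rw [h]
    omega
  have hsum : P n (2 ^ n - 1) (i : ℕ) = n - (i : ℕ) := by
    rw [P]
    rw [Finset.sum_congr rfl (fun j hj => hterm j (Finset.mem_Ico.mp hj).2)]
    simp [Nat.card_Ico]
  simp only [dec, altEnd1, hsum, decide_eq_decide]
  have := i.isLt
  omega

lemma mIdx_altEnd1 (n : ℕ) (hn : 0 < n) : mIdx n (altEnd1 n) = n := by
  have h : AltPrefix n (altEnd1 n) n := by
    intro j hj hjn
    simp only [altEnd1, ne_eq, decide_eq_decide]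
    omega
  have h1 := Nat.le_findGreatest (le_refl n) h
  have h2 : Nat.findGreatest (AltPrefix n (altEnd1 n)) n ≤ n := Nat.findGreatest_le n
  rw [mIdx]; omega

lemma phi_altEnd1 (n : ℕ) (hn : 0 < n) : Phi n (altEnd1 n) = fun _ => false := by
  have hm := mIdx_altEnd1 n hn
  funext i
  simp only [Phi, hm]
  rw [dif_pos i.isLt]
  have : altEnd1 n ⟨n - 1, by omega⟩ = true := by
    simp only [altEnd1, decide_eq_true_eq]
    omega
  rw [this]
  rfl

lemma iterate_dec (n : ℕ) (hn : 0 < n) :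
    ∀ k, k ≤ 2 ^ n - 1 → (Phi n)^[k] (fun _ => false) = dec n k := by
  intro k
  induction k with
  | zero => intro _; rw [Function.iterate_zero_apply, dec_zero]
  | succ k ih =>
    intro hk
    rw [Function.iterate_succ_apply', ih (by omega), phi_dec hn (by omega)]

end PhiAux

/-- `Φₙ^{2ⁿ-1}(0,…,0)` is the alternating vector `(…,0,1,0,1)`, and consequently
`Φₙ^{2ⁿ}(0,…,0) = (0,…,0)`. -/
theorem Phi_orbit_last (n : ℕ) (hn : 0 < n) :
    (Phi n)^[2 ^ n - 1] (fun _ => false) = altEnd1 n ∧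
    (Phi n)^[2 ^ n] (fun _ => false) = fun _ => false := by
  have h1 : (Phi n)^[2 ^ n - 1] (fun _ => false) = altEnd1 n := by
    rw [PhiAux.iterate_dec n hn (2 ^ n - 1) le_rfl, PhiAux.dec_top]
  refine ⟨h1, ?_⟩
  have hpow : 0 < 2 ^ n := Nat.pow_pos (by norm_num)
  rw [show 2 ^ n = (2 ^ n - 1) + 1 by omega, Function.iterate_succ_apply', h1,
    PhiAux.phi_altEnd1 n hn]
end

section
/- For every positive integer n there exists a function Φ : {0,1}^n → {0,1}^n, each of whose n coordinates is a linear threshold function (with integer weights and thresholds), such that Φ has period 2^n; in particular, every subset of coordinates (state in {0,1}^n) occurs in the orbit of (0,…,0). -/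
namespace MP



def krun (n : ℕ) (X : ℕ → Bool) (v : Bool) (p : ℕ) : ℕ :=
  if h : p < n then (if X p = v then 0 else krun n X (X p) (p + 1) + 1) else 0
  termination_by n - p
  decreasing_by omega

def Tsum (n : ℕ) (X : ℕ → Bool) (p : ℕ) : ℤ :=
  ∑ j ∈ Finset.Ico p n, (Nat.fib (n - j) : ℤ) * (if X j then 1 else 0)

lemma tail_main (n : ℕ) (X : ℕ → Bool) :
    ∀ d p, n ≤ p + d →
      (0 ≤ Tsum n X p ∧ Tsum n X p ≤ (Nat.fib (n - p + 2) : ℤ) - 1) ∧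
      (krun n X false p % 2 = 0 ↔ Tsum n X p < (Nat.fib (n - p + 1) : ℤ)) ∧
      (krun n X true p % 2 = 0 ↔ (Nat.fib (n - p) : ℤ) ≤ Tsum n X p) := by
  intro d
  induction d with
  | zero =>
    intro p hp
    have he : Finset.Ico p n = ∅ := Finset.Ico_eq_empty (by omega)
    have hT : Tsum n X p = 0 := by rw [Tsum, he, Finset.sum_empty]
    have hk : ∀ v, krun n X v p = 0 := by
      intro v; rw [krun]; rw [dif_neg (by omega)]
    have hnp : n - p = 0 := by omega
    rw [hT, hk, hk, hnp]
    norm_num [Nat.fib_one]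
  | succ d ih =>
    intro p hp
    by_cases h : p < n
    · have hsplit : Tsum n X p
          = (Nat.fib (n - p) : ℤ) * (if X p then 1 else 0) + Tsum n X (p + 1) := by
        rw [Tsum, Finset.sum_eq_sum_Ico_succ_bot h]; rfl
      obtain ⟨⟨hT0, hT1⟩, hF, hTr⟩ := ih (p + 1) (by omega)
      have e2 : n - (p + 1) + 2 = n - p + 1 := by omega
      have e1 : n - (p + 1) + 1 = n - p := by omega
      have e0 : n - (p + 1) = n - p - 1 := by omega
      rw [e2] at hT1; rw [e1] at hF; rw [e0] at hTr
      have hfib : (Nat.fib (n - p + 1) : ℤ) = Nat.fib (n - p - 1) + Nat.fib (n - p) := by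
        have h3 : n - p + 1 = (n - p - 1) + 2 := by omega
        have h4 : n - p - 1 + 1 = n - p := by omega
        rw [h3, Nat.fib_add_two, h4]
        push_cast; ring
      have hfib2 : (Nat.fib (n - p + 2) : ℤ) = Nat.fib (n - p) + Nat.fib (n - p + 1) := by
        rw [Nat.fib_add_two]; push_cast; ring
      have hfibpos : (1 : ℤ) ≤ Nat.fib (n - p) := by
        exact_mod_cast Nat.succ_le_of_lt (Nat.fib_pos.2 (by omega))
      have hfibpos' : (0 : ℤ) ≤ Nat.fib (n - p - 1) := by positivity
      have hkf : krun n X false p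
          = if X p = false then 0 else krun n X (X p) (p + 1) + 1 := by
        rw [krun, dif_pos h]
      have hkt : krun n X true p
          = if X p = true then 0 else krun n X (X p) (p + 1) + 1 := by
        rw [krun, dif_pos h]
      cases hxp : X p
      · rw [hxp] at hkf hkt hsplit
        simp only [Bool.false_eq_true, if_false, if_true, mul_zero, zero_add] at hkf hkt hsplit
        rw [hsplit, hkf, hkt]
        refine ⟨⟨hT0, by linarith⟩, ?_, ?_⟩
        · simp only [Nat.zero_mod]
          exact ⟨fun _ => by linarith, fun _ => trivial⟩
        · constructor
          · intro hpar
            by_contra hlt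
            push_neg at hlt
            have := hF.2 (by linarith)
            omega
          · intro hge
            have h2 : ¬ (krun n X false (p + 1) % 2 = 0) := fun hh => by
              have := hF.1 hh; linarith
            omega
      · rw [hxp] at hkf hkt hsplit
        simp only [Bool.true_eq_false, if_false, if_true, mul_one] at hkf hkt hsplit
        rw [hsplit, hkf, hkt]
        refine ⟨⟨by linarith, by linarith⟩, ?_, ?_⟩
        · constructor
          · intro hpar
            have : ¬ ((Nat.fib (n - p - 1) : ℤ) ≤ Tsum n X (p+1)) := by
              intro hh; have := hTr.2 hh; omega
            push_neg at this
            linarith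
          · intro hlt
            have h2 : ¬ (krun n X true (p + 1) % 2 = 0) := fun hh => by
              have := hTr.1 hh; linarith
            omega
        · simp only [Nat.zero_mod]
          exact ⟨fun _ => by linarith, fun _ => trivial⟩
    · have he : Finset.Ico p n = ∅ := Finset.Ico_eq_empty (by omega)
      have hT : Tsum n X p = 0 := by rw [Tsum, he, Finset.sum_empty]
      have hk : ∀ v, krun n X v p = 0 := by
        intro v; rw [krun]; rw [dif_neg (by omega)]
      have hnp : n - p = 0 := by omega
      rw [hT, hk, hk, hnp]
      norm_num [Nat.fib_one]



def Asum (X : ℕ → Bool) (i : ℕ) : ℤ :=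
  ∑ j ∈ Finset.range (i + 1), (-1 : ℤ) ^ (i - j) * (if X j then 1 else 0)

def AltTo (X : ℕ → Bool) (i : ℕ) : Prop := ∀ j, j + 1 ≤ i → X j ≠ X (j + 1)

lemma asum_succ (X : ℕ → Bool) (i : ℕ) :
    Asum X (i + 1) = (if X (i + 1) then 1 else 0) - Asum X i := by
  rw [Asum, Finset.sum_range_succ]
  have h1 : ∀ j ∈ Finset.range (i + 1),
      (-1 : ℤ) ^ (i + 1 - j) * (if X j then 1 else 0)
        = -((-1 : ℤ) ^ (i - j) * (if X j then 1 else 0)) := by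
    intro j hj
    have hj' : j ≤ i := by simpa [Nat.lt_succ_iff] using hj
    have : i + 1 - j = (i - j) + 1 := by omega
    rw [this, pow_succ]
    ring
  rw [Finset.sum_congr rfl h1, Finset.sum_neg_distrib]
  rw [show Asum X i = ∑ j ∈ Finset.range (i + 1), (-1 : ℤ) ^ (i - j) * (if X j then 1 else 0) from rfl]
  have : i + 1 - (i + 1) = 0 := by omega
  rw [this, pow_zero]
  ring

lemma altTo_succ (X : ℕ → Bool) (i : ℕ) :
    AltTo X (i + 1) ↔ (AltTo X i ∧ X i ≠ X (i + 1)) := by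
  constructor
  · intro h
    exact ⟨fun j hj => h j (by omega), h i (by omega)⟩
  · rintro ⟨h1, h2⟩ j hj
    rcases Nat.lt_or_ge (j + 1) (i + 1) with hc | hc
    · exact h1 j (by omega)
    · have : j = i := by omega
      subst this; exact h2

lemma prefix_main (X : ℕ → Bool) :
    ∀ i, (-(((i + 1) / 2 : ℕ) : ℤ) ≤ Asum X i ∧ Asum X i ≤ ((i / 2 : ℕ) : ℤ) + 1) ∧
      (Asum X i = ((i / 2 : ℕ) : ℤ) + 1 ↔ (AltTo X i ∧ X i = true)) ∧
      (Asum X i = -(((i + 1) / 2 : ℕ) : ℤ) ↔ (AltTo X i ∧ X i = false)) := by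
  intro i
  induction i with
  | zero =>
    have h0 : Asum X 0 = (if X 0 then 1 else 0) := by
      rw [Asum, Finset.sum_range_one]
      norm_num
    have halt : AltTo X 0 := fun j hj => by omega
    rw [h0]
    cases hx : X 0 <;> simp [halt]
  | succ i ih =>
    obtain ⟨⟨hlb, hub⟩, hmax, hmin⟩ := ih
    have hrec := asum_succ X i
    have hc1 : (((i + 1 + 1) / 2 : ℕ) : ℤ) = ((i / 2 : ℕ) : ℤ) + 1 := by
      have : (i + 1 + 1) / 2 = i / 2 + 1 := by omega
      rw [this]; push_cast; ring
    have halt := altTo_succ X i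
    cases hx : X (i + 1)
    · rw [hx] at hrec halt
      simp only [Bool.false_eq_true, if_false, zero_sub] at hrec
      refine ⟨⟨?_, ?_⟩, ?_, ?_⟩
      · rw [hrec, hc1]; linarith
      · rw [hrec]; linarith
      · rw [hrec]
        constructor
        · intro hh; exfalso; linarith
        · rintro ⟨-, hh⟩; simp at hh
      · rw [hrec, hc1]
        constructor
        · intro hh
          have hAi : Asum X i = ((i / 2 : ℕ) : ℤ) + 1 := by linarith
          obtain ⟨ha, hv⟩ := hmax.1 hAi
          exact ⟨halt.2 ⟨ha, by simp [hv]⟩, rfl⟩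
        · rintro ⟨ha, -⟩
          obtain ⟨h1, h2⟩ := halt.1 ha
          have hv : X i = true := by
            cases hxi : X i
            · rw [hxi] at h2; simp at h2
            · rfl
          have := hmax.2 ⟨h1, hv⟩
          linarith
    · rw [hx] at hrec halt
      simp only [if_true] at hrec
      refine ⟨⟨?_, ?_⟩, ?_, ?_⟩
      · rw [hrec, hc1]; linarith
      · rw [hrec]; linarith
      · rw [hrec]
        constructor
        · intro hh
          have hAi : Asum X i = -(((i + 1) / 2 : ℕ) : ℤ) := by linarith
          obtain ⟨ha, hv⟩ := hmin.1 hAi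
          exact ⟨halt.2 ⟨ha, by simp [hv]⟩, rfl⟩
        · rintro ⟨ha, -⟩
          obtain ⟨h1, h2⟩ := halt.1 ha
          have hv : X i = false := by
            cases hxi : X i
            · rfl
            · rw [hxi] at h2; simp at h2
          have := hmin.2 ⟨h1, hv⟩
          linarith
      · rw [hrec, hc1]
        constructor
        · intro hh; exfalso; linarith
        · rintro ⟨-, hh⟩; simp at hh

def Xe (n : ℕ) (x : Fin n → Bool) (j : ℕ) : Bool :=
  if h : j < n then x ⟨j, h⟩ else false

lemma Xe_eq (n : ℕ) (x : Fin n → Bool) (j : ℕ) (h : j < n) : Xe n x j = x ⟨j, h⟩ :=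
  dif_pos h

lemma Xe_fin (n : ℕ) (x : Fin n → Bool) (i : Fin n) : Xe n x (i : ℕ) = x i := by
  rw [Xe_eq n x _ i.isLt]

variable {n : ℕ} (x : Fin n → Bool)

lemma m_le : mIdx n x ≤ n := Nat.findGreatest_le n

lemma m_pos (hn : 0 < n) : 1 ≤ mIdx n x :=
  Nat.le_findGreatest hn (fun j hj => by omega)

lemma m_alt (hn : 0 < n) : ∀ j, j + 1 < mIdx n x → Xe n x j ≠ Xe n x (j + 1) := by
  intro j hj
  have hle := m_le x
  have hspec : AltPrefix n x (mIdx n x) :=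
    Nat.findGreatest_spec (P := AltPrefix n x) hn (fun j hj => by omega)
  have hjn : j + 1 < n := by omega
  rw [Xe_eq n x j (by omega), Xe_eq n x (j+1) hjn]
  exact hspec j hj hjn

lemma m_max (k : ℕ) (hk : k ≤ n)
    (h : ∀ j, j + 1 < k → Xe n x j ≠ Xe n x (j + 1)) : k ≤ mIdx n x := by
  apply Nat.le_findGreatest hk
  intro j hj hjn
  have := h j hj
  rw [Xe_eq n x j (by omega), Xe_eq n x (j+1) hjn] at this
  exact this

lemma m_break (hn : 0 < n) (h : mIdx n x < n) :
    Xe n x (mIdx n x - 1) = Xe n x (mIdx n x) := by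
  by_contra hne
  have hp := m_pos x hn
  have : mIdx n x + 1 ≤ mIdx n x := by
    apply m_max x (mIdx n x + 1) (by omega)
    intro j hj
    rcases Nat.lt_or_ge (j + 1) (mIdx n x) with hc | hc
    · exact m_alt x hn j hc
    · have hje : j = mIdx n x - 1 := by omega
      rw [hje]
      have : mIdx n x - 1 + 1 = mIdx n x := by omega
      rw [this]
      exact hne
  omega

lemma run_of_alt (hn : 0 < n) :
    ∀ d i0, i0 < mIdx n x → mIdx n x - 1 - i0 = d →
      krun n (Xe n x) (Xe n x i0) (i0 + 1) = d ∧
      Xe n x (mIdx n x - 1) = xor (Xe n x i0) (decide (d % 2 = 1)) := by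
  intro d
  induction d with
  | zero =>
    intro i0 hi0 hd
    have hle := m_le x
    have hi0e : i0 = mIdx n x - 1 := by omega
    constructor
    · rw [krun]
      rcases Nat.lt_or_ge (i0 + 1) n with hc | hc
      · rw [dif_pos hc]
        have : Xe n x (i0 + 1) = Xe n x i0 := by
          have h1 : mIdx n x < n := by omega
          have := m_break x hn h1
          rw [hi0e]
          have h2 : mIdx n x - 1 + 1 = mIdx n x := by omega
          rw [h2, this]
        rw [if_pos this]
      · rw [dif_neg (by omega)]
    · rw [hi0e]
      simp
  | succ d ih =>
    intro i0 hi0 hd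
    have hle := m_le x
    have halt : Xe n x i0 ≠ Xe n x (i0 + 1) := m_alt x hn i0 (by omega)
    have hi1 : i0 + 1 < mIdx n x := by omega
    obtain ⟨hk, hx⟩ := ih (i0 + 1) hi1 (by omega)
    constructor
    · rw [krun, dif_pos (by omega : i0 + 1 < n)]
      rw [if_neg (fun hh => halt hh.symm), hk]
    · rw [hx]
      cases hv : Xe n x i0 <;> cases hv1 : Xe n x (i0 + 1)
      · rw [hv, hv1] at halt; exact absurd rfl halt
      · have h2 : (d + 1) % 2 = 1 ↔ ¬ (d % 2 = 1) := by omega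
        cases hpar : decide (d % 2 = 1) <;> cases hpar2 : decide ((d + 1) % 2 = 1) <;>
          simp_all <;> omega
      · have h2 : (d + 1) % 2 = 1 ↔ ¬ (d % 2 = 1) := by omega
        cases hpar : decide (d % 2 = 1) <;> cases hpar2 : decide ((d + 1) % 2 = 1) <;>
          simp_all <;> omega
      · rw [hv, hv1] at halt; exact absurd rfl halt

lemma phi_eq (i : Fin n) :
    Phi n x i = if (i : ℕ) < mIdx n x then ! (Xe n x (mIdx n x - 1)) else Xe n x (i : ℕ) := by
  rw [Phi]
  by_cases h : (i : ℕ) < mIdx n x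
  · rw [dif_pos h, if_pos h, Xe_eq]
  · rw [dif_neg h, if_neg h, Xe_fin]


def W (n i j : ℕ) : ℤ :=
  if j ≤ i then
    -(-1 : ℤ) ^ (i - j) * (Nat.fib (n - i) : ℤ)
      + (if j = i then (Nat.fib (n - i) : ℤ) * (i : ℤ) + (Nat.fib (n - i - 1) : ℤ) else 0)
  else -(Nat.fib (n - j) : ℤ)

def TH (n i : ℕ) : ℤ := (Nat.fib (n - i) : ℤ) * ((((i + 1) / 2 : ℕ) : ℤ) - 1) + 1

lemma sum_decomp {n : ℕ} (x : Fin n → Bool) (i : Fin n) :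
    ∑ j : Fin n, W n (i : ℕ) (j : ℕ) * (if x j then 1 else 0)
      = -(Nat.fib (n - (i : ℕ)) : ℤ) * Asum (Xe n x) (i : ℕ)
        + ((Nat.fib (n - (i : ℕ)) : ℤ) * ((i : ℕ) : ℤ) + (Nat.fib (n - (i : ℕ) - 1) : ℤ))
          * (if x i then 1 else 0)
        - Tsum n (Xe n x) ((i : ℕ) + 1) := by
  have h0 : ∑ j : Fin n, W n (i : ℕ) (j : ℕ) * (if x j then 1 else 0)
      = ∑ j ∈ Finset.range n, W n (i : ℕ) j * (if Xe n x j then 1 else 0) := by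
    rw [← Fin.sum_univ_eq_sum_range (fun j => W n (i : ℕ) j * (if Xe n x j then 1 else 0)) n]
    exact Finset.sum_congr rfl fun j _ => by rw [Xe_fin]
  rw [h0, Finset.range_eq_Ico,
    ← Finset.sum_Ico_consecutive _ (Nat.zero_le ((i : ℕ) + 1)) (by omega : (i : ℕ) + 1 ≤ n),
    ← Finset.range_eq_Ico]
  have h1 : ∑ j ∈ Finset.range ((i : ℕ) + 1), W n (i : ℕ) j * (if Xe n x j then 1 else 0)
      = -(Nat.fib (n - (i : ℕ)) : ℤ) * Asum (Xe n x) (i : ℕ)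
        + ((Nat.fib (n - (i : ℕ)) : ℤ) * ((i : ℕ) : ℤ) + (Nat.fib (n - (i : ℕ) - 1) : ℤ))
          * (if x i then 1 else 0) := by
    have hterm : ∀ j ∈ Finset.range ((i : ℕ) + 1),
        W n (i : ℕ) j * (if Xe n x j then 1 else 0)
          = -(Nat.fib (n - (i : ℕ)) : ℤ) * ((-1 : ℤ) ^ ((i : ℕ) - j) * (if Xe n x j then 1 else 0))
            + (if j = (i : ℕ) then
                ((Nat.fib (n - (i : ℕ)) : ℤ) * ((i : ℕ) : ℤ) + (Nat.fib (n - (i : ℕ) - 1) : ℤ))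
                  * (if Xe n x j then 1 else 0)
              else 0) := by
      intro j hj
      have hjle : j ≤ (i : ℕ) := by simpa [Nat.lt_succ_iff] using hj
      rw [W, if_pos hjle]
      by_cases hje : j = (i : ℕ)
      · rw [if_pos hje, if_pos hje, hje]
        ring
      · rw [if_neg hje, if_neg hje]
        ring
    rw [Finset.sum_congr rfl hterm, Finset.sum_add_distrib, ← Finset.mul_sum,
      Finset.sum_ite_eq' (Finset.range ((i : ℕ) + 1)) (i : ℕ)]
    rw [if_pos (Finset.self_mem_range_succ (i : ℕ)), Asum, Xe_fin]
  have h2 : ∑ j ∈ Finset.Ico ((i : ℕ) + 1) n, W n (i : ℕ) j * (if Xe n x j then 1 else 0)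
      = - Tsum n (Xe n x) ((i : ℕ) + 1) := by
    rw [Tsum, ← Finset.sum_neg_distrib]
    refine Finset.sum_congr rfl fun j hj => ?_
    have hjgt : ¬ (j ≤ (i : ℕ)) := by
      have := (Finset.mem_Ico.mp hj).1; omega
    rw [W, if_neg hjgt]
    ring
  rw [h1, h2]
  ring

set_option maxHeartbeats 1000000 in
lemma phi_iff {n : ℕ} (hn : 0 < n) (x : Fin n → Bool) (i : Fin n) :
    Phi n x i = true ↔
      TH n (i : ℕ) ≤ ∑ j : Fin n, W n (i : ℕ) (j : ℕ) * (if x j then 1 else 0) := by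
  have hin : (i : ℕ) < n := i.isLt
  have hXi : Xe n x (i : ℕ) = x i := Xe_fin n x i
  obtain ⟨⟨hlb, hub⟩, hmax, hmin⟩ := prefix_main (Xe n x) (i : ℕ)
  obtain ⟨⟨hT0, hT1⟩, hKf, hKt⟩ := tail_main n (Xe n x) n ((i : ℕ) + 1) (by omega)
  have e2 : n - ((i : ℕ) + 1) + 2 = n - (i : ℕ) + 1 := by omega
  have e1 : n - ((i : ℕ) + 1) + 1 = n - (i : ℕ) := by omega
  have e0 : n - ((i : ℕ) + 1) = n - (i : ℕ) - 1 := by omega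
  rw [e2] at hT1; rw [e1] at hKf; rw [e0] at hKt
  have hfib2 : (Nat.fib (n - (i : ℕ) + 1) : ℤ) = Nat.fib (n - (i : ℕ) - 1) + Nat.fib (n - (i : ℕ)) := by
    have h3 : n - (i : ℕ) + 1 = (n - (i : ℕ) - 1) + 2 := by omega
    have h4 : n - (i : ℕ) - 1 + 1 = n - (i : ℕ) := by omega
    rw [h3, Nat.fib_add_two, h4]
    push_cast; ring
  have hFpos : (1 : ℤ) ≤ (Nat.fib (n - (i : ℕ)) : ℤ) := by
    exact_mod_cast Nat.succ_le_of_lt (Nat.fib_pos.2 (by omega))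
  have hcc : (((i : ℕ) / 2 : ℕ) : ℤ) + 1 + ((((i : ℕ) + 1) / 2 : ℕ) : ℤ) = ((i : ℕ) : ℤ) + 1 := by
    have : ((i : ℕ) / 2) + 1 + (((i : ℕ) + 1) / 2) = (i : ℕ) + 1 := by omega
    exact_mod_cast this
  have key : (Nat.fib (n - (i : ℕ)) : ℤ) * ((((i : ℕ) / 2 : ℕ) : ℤ) + 1)
      + (Nat.fib (n - (i : ℕ)) : ℤ) * ((((i : ℕ) + 1) / 2 : ℕ) : ℤ)
      = (Nat.fib (n - (i : ℕ)) : ℤ) * ((i : ℕ) : ℤ) + (Nat.fib (n - (i : ℕ)) : ℤ) := by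
    linear_combination (Nat.fib (n - (i : ℕ)) : ℤ) * hcc
  have hiff : ((i : ℕ) < mIdx n x) ↔ AltTo (Xe n x) (i : ℕ) := by
    constructor
    · intro h j hj
      exact m_alt x hn j (by omega)
    · intro h
      have := m_max x ((i : ℕ) + 1) (by omega) (fun j hj => h j (by omega))
      omega
  have hS := sum_decomp x i
  rw [phi_eq, hS]
  rw [TH]
  by_cases hm : (i : ℕ) < mIdx n x
  · rw [if_pos hm]
    obtain ⟨hk, hxm⟩ := run_of_alt x hn (mIdx n x - 1 - (i : ℕ)) (i : ℕ) hm rfl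
    have halt : AltTo (Xe n x) (i : ℕ) := hiff.mp hm
    rw [hxm]
    cases hv : x i
    · rw [hXi] at hk hxm ⊢
      rw [hv] at hk hxm ⊢
      have hA : Asum (Xe n x) (i : ℕ) = -((((i : ℕ) + 1) / 2 : ℕ) : ℤ) := hmin.2 ⟨halt, by rw [hXi, hv]⟩
      rw [hA]
      have hL : (!(xor false (decide ((mIdx n x - 1 - (i : ℕ)) % 2 = 1)))) = true
          ↔ (mIdx n x - 1 - (i : ℕ)) % 2 = 0 := by
        cases hd2 : decide ((mIdx n x - 1 - (i : ℕ)) % 2 = 1) <;> simp_all <;> omega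
      rw [hL]
      rw [← hk] at *
      constructor
      · intro hpar
        have := hKf.1 hpar
        simp only [Bool.false_eq_true, if_false, mul_zero, add_zero]
        linarith
      · intro hle
        apply hKf.2
        simp only [Bool.false_eq_true, if_false, mul_zero, add_zero] at hle
        linarith
    · rw [hXi] at hk hxm ⊢
      rw [hv] at hk hxm ⊢
      have hA : Asum (Xe n x) (i : ℕ) = (((i : ℕ) / 2 : ℕ) : ℤ) + 1 := hmax.2 ⟨halt, by rw [hXi, hv]⟩
      rw [hA]
      have hL : (!(xor true (decide ((mIdx n x - 1 - (i : ℕ)) % 2 = 1)))) = true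
          ↔ (mIdx n x - 1 - (i : ℕ)) % 2 = 1 := by
        cases hd2 : decide ((mIdx n x - 1 - (i : ℕ)) % 2 = 1) <;> simp_all
      rw [hL]
      rw [← hk] at *
      constructor
      · intro hpar
        have hne : ¬ (krun n (Xe n x) true ((i : ℕ) + 1) % 2 = 0) := by omega
        have hTlt : ¬ ((Nat.fib (n - (i : ℕ) - 1) : ℤ) ≤ Tsum n (Xe n x) ((i : ℕ) + 1)) :=
          fun hh => hne (hKt.2 hh)
        push_neg at hTlt
        simp only [if_true, mul_one]
        linarith
      · intro hle
        simp only [if_true, mul_one] at hle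
        have hTlt : Tsum n (Xe n x) ((i : ℕ) + 1) < (Nat.fib (n - (i : ℕ) - 1) : ℤ) := by linarith
        have hne : ¬ (krun n (Xe n x) true ((i : ℕ) + 1) % 2 = 0) := by
          intro hh; have := hKt.1 hh; linarith
        omega
  · rw [if_neg hm]
    have halt : ¬ AltTo (Xe n x) (i : ℕ) := fun h => hm (hiff.mpr h)
    rw [show Xe n x (i : ℕ) = x i from hXi]
    cases hv : x i
    · simp only [Bool.false_eq_true, false_iff, not_le, if_false, mul_zero, add_zero]
      have hAne : Asum (Xe n x) (i : ℕ) ≠ -((((i : ℕ) + 1) / 2 : ℕ) : ℤ) := fun hh => halt (hmin.1 hh).1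
      have hAgt : -((((i : ℕ) + 1) / 2 : ℕ) : ℤ) < Asum (Xe n x) (i : ℕ) := hlb.lt_of_ne (Ne.symm hAne)
      have h1 : 0 ≤ (Nat.fib (n - (i : ℕ)) : ℤ) * (Asum (Xe n x) (i : ℕ) + ((((i : ℕ) + 1) / 2 : ℕ) : ℤ) - 1) :=
        mul_nonneg (by positivity) (by linarith)
      nlinarith [hT0, h1]
    · simp only [true_iff]
      have hAne : Asum (Xe n x) (i : ℕ) ≠ (((i : ℕ) / 2 : ℕ) : ℤ) + 1 := fun hh => halt (hmax.1 hh).1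
      have hAlt : Asum (Xe n x) (i : ℕ) < (((i : ℕ) / 2 : ℕ) : ℤ) + 1 := hub.lt_of_ne hAne
      have h1 : 0 ≤ (Nat.fib (n - (i : ℕ)) : ℤ) * ((((i : ℕ) / 2 : ℕ) : ℤ) + 1 - 1 - Asum (Xe n x) (i : ℕ)) :=
        mul_nonneg (by positivity) (by linarith)
      simp only [if_true, mul_one]
      nlinarith [hT1, hfib2, key, h1]

def Be (n : ℕ) (x : Fin n → Bool) (j : ℕ) : Bool :=
  if h : j < n then cbit n x ⟨j, h⟩ else false

def val (n : ℕ) (b : ℕ → Bool) : ℕ :=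
  ∑ j ∈ Finset.range n, (if b j then 1 else 0) * 2 ^ j

lemma Be_eq {n : ℕ} (x : Fin n → Bool) (j : ℕ) (h : j < n) :
    Be n x j = if j + 1 < n then xor (Xe n x j) (Xe n x (j + 1)) else Xe n x j := by
  rw [Be, dif_pos h, cbit]
  by_cases h2 : j + 1 < n
  · rw [dif_pos h2, if_pos h2, Xe_eq n x j h, Xe_eq n x (j + 1) h2]
  · rw [dif_neg h2, if_neg h2, Xe_eq n x j h]

lemma xor_of_ne {a b : Bool} (h : a ≠ b) : xor a b = true := by
  cases a <;> cases b <;> simp_all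

lemma phi_Xe {n : ℕ} (x : Fin n → Bool) (j : ℕ) :
    Xe n (Phi n x) j
      = if j < mIdx n x then !(Xe n x (mIdx n x - 1)) else Xe n x j := by
  by_cases hj : j < n
  · rw [Xe_eq n _ j hj]
    have := phi_eq x ⟨j, hj⟩
    simpa using this
  · have := m_le x
    rw [if_neg (by omega)]
    simp [Xe, hj]

lemma Be_ones {n : ℕ} (x : Fin n → Bool) (hn : 0 < n) (j : ℕ) (hj : j + 1 < mIdx n x) :
    Be n x j = true := by
  have hm := m_le x
  rw [Be_eq x j (by omega), if_pos (by omega)]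
  exact xor_of_ne (m_alt x hn j hj)

lemma Be_break {n : ℕ} (x : Fin n → Bool) (hn : 0 < n) (hmn : mIdx n x < n) :
    Be n x (mIdx n x - 1) = false := by
  have hm1 := m_pos x hn
  have he : mIdx n x - 1 + 1 = mIdx n x := by omega
  rw [Be_eq x _ (by omega), if_pos (by omega), he, m_break x hn hmn]
  exact Bool.xor_self _

lemma Be_phi_flip {n : ℕ} (x : Fin n → Bool) (hn : 0 < n) (j : ℕ) (hj : j < mIdx n x) :
    Be n (Phi n x) j = ! Be n x j := by
  have hm := m_le x
  have hm1 := m_pos x hn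
  have hjn : j < n := by omega
  rcases Nat.lt_trichotomy (j + 1) (mIdx n x) with hc | hc | hc
  · -- j + 1 < m
    rw [Be_eq (Phi n x) j hjn, Be_eq x j hjn, if_pos (by omega), if_pos (by omega)]
    rw [phi_Xe x j, phi_Xe x (j + 1), if_pos hj, if_pos hc]
    rw [Bool.xor_self, xor_of_ne (m_alt x hn j hc)]
    rfl
  · -- j + 1 = m
    by_cases hmn : mIdx n x < n
    · rw [Be_eq (Phi n x) j hjn, Be_eq x j hjn, if_pos (by omega), if_pos (by omega)]
      rw [phi_Xe x j, phi_Xe x (j + 1), if_pos hj, if_neg (by omega)]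
      have hje : j = mIdx n x - 1 := by omega
      rw [hje]
      have he : mIdx n x - 1 + 1 = mIdx n x := by omega
      rw [he, m_break x hn hmn, Bool.xor_self]
      cases hb : Xe n x (mIdx n x) <;> simp
    · -- m = n, j = n - 1
      have hmn' : mIdx n x = n := by omega
      rw [Be_eq (Phi n x) j hjn, Be_eq x j hjn, if_neg (by omega), if_neg (by omega)]
      rw [phi_Xe x j, if_pos hj]
      have hje : j = mIdx n x - 1 := by omega
      rw [hje]
  · omega

lemma Be_phi_keep {n : ℕ} (x : Fin n → Bool) (j : ℕ) (hj : mIdx n x ≤ j) :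
    Be n (Phi n x) j = Be n x j := by
  by_cases hjn : j < n
  · rw [Be_eq (Phi n x) j hjn, Be_eq x j hjn]
    by_cases h2 : j + 1 < n
    · rw [if_pos h2, if_pos h2, phi_Xe x (j + 1), if_neg (by omega),
        phi_Xe x j, if_neg (by omega)]
    · rw [if_neg h2, if_neg h2, phi_Xe x j, if_neg (by omega)]
  · rw [Be, dif_neg hjn, Be, dif_neg hjn]

lemma val_lt (n : ℕ) (b : ℕ → Bool) : val n b < 2 ^ n := by
  induction n with
  | zero => simp [val]
  | succ n ih =>
    rw [val, Finset.sum_range_succ, ← val]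
    have h2 : (2 : ℕ) ^ (n + 1) = 2 ^ n + 2 ^ n := by ring
    cases hb : b n <;> simp [hb] <;> omega

lemma val_digits {n : ℕ} (b b' : ℕ → Bool) (h : val n b = val n b') :
    ∀ j, j < n → b j = b' j := by
  induction n with
  | zero => omega
  | succ n ih =>
    have h1 := val_lt n b
    have h2 := val_lt n b'
    have hvb : ∀ c : ℕ → Bool, val (n + 1) c = val n c + (if c n then 1 else 0) * 2 ^ n := by
      intro c; rw [val, Finset.sum_range_succ]; rfl
    rw [hvb b, hvb b'] at h
    have heq : val n b = val n b' ∧ b n = b' n := by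
      cases hb : b n <;> cases hb' : b' n <;> rw [hb, hb'] at h <;> simp at h <;>
        first
        | exact ⟨by omega, rfl⟩
        | omega
    intro j hj
    rcases Nat.lt_or_ge j n with hc | hc
    · exact ih heq.1 j hc
    · have : j = n := by omega
      rw [this]; exact heq.2

lemma rmap_eq_val {n : ℕ} (x : Fin n → Bool) : rmap n x = val n (Be n x) := by
  rw [rmap, val, ← Fin.sum_univ_eq_sum_range (fun j => (if Be n x j then 1 else 0) * 2 ^ j) n]
  refine Finset.sum_congr rfl fun j _ => ?_
  rw [Be, dif_pos j.isLt]

lemma rmap_lt {n : ℕ} (x : Fin n → Bool) : rmap n x < 2 ^ n := by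
  rw [rmap_eq_val]; exact val_lt n (Be n x)

lemma rmap_inj {n : ℕ} (x x' : Fin n → Bool) (h : rmap n x = rmap n x') : x = x' := by
  rw [rmap_eq_val, rmap_eq_val] at h
  have hB : ∀ j, j < n → Be n x j = Be n x' j := val_digits _ _ h
  have hX : ∀ d j, j < n → n - 1 - j = d → Xe n x j = Xe n x' j := by
    intro d
    induction d with
    | zero =>
      intro j hj hd
      have hB' := hB j hj
      rw [Be_eq x j hj, Be_eq x' j hj, if_neg (by omega), if_neg (by omega)] at hB'
      exact hB'
    | succ d ih =>
      intro j hj hd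
      have h2 : j + 1 < n := by omega
      have hB' := hB j hj
      rw [Be_eq x j hj, Be_eq x' j hj, if_pos h2, if_pos h2,
        ih (j + 1) h2 (by omega)] at hB'
      revert hB'
      cases hx1 : Xe n x j <;> cases hx2 : Xe n x' j <;>
        cases hx3 : Xe n x' (j + 1) <;> simp_all
  funext i
  have := hX (n - 1 - (i : ℕ)) (i : ℕ) i.isLt rfl
  rw [Xe_fin, Xe_fin] at this
  exact this

lemma two_pow_sum : ∀ k : ℕ, ∑ j ∈ Finset.range k, 2 ^ j = 2 ^ k - 1 := by
  intro k
  induction k with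
  | zero => simp
  | succ k ih =>
    rw [Finset.sum_range_succ, ih]
    have : 1 ≤ 2 ^ k := Nat.one_le_two_pow
    have h2 : (2 : ℕ) ^ (k + 1) = 2 ^ k + 2 ^ k := by ring
    omega

lemma succ_mod_helper {M a b : ℕ} (hbM : b < M) (h : a + 1 = b ∨ (a + 1 = M ∧ b = 0)) :
    b = (a + 1) % M := by
  rcases h with h | ⟨h1, h2⟩
  · rw [← h, Nat.mod_eq_of_lt (by omega)]
  · rw [h1, h2, Nat.mod_self]

lemma rmap_phi {n : ℕ} (hn : 0 < n) (x : Fin n → Bool) :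
    rmap n (Phi n x) = (rmap n x + 1) % 2 ^ n := by
  have hm := m_le x
  have hm1 := m_pos x hn
  rw [rmap_eq_val, rmap_eq_val]
  have hsplit : ∀ b : ℕ → Bool, val n b
      = ((∑ j ∈ Finset.range (mIdx n x - 1), (if b j then 1 else 0) * 2 ^ j)
          + (if b (mIdx n x - 1) then 1 else 0) * 2 ^ (mIdx n x - 1))
        + ∑ j ∈ Finset.Ico (mIdx n x) n, (if b j then 1 else 0) * 2 ^ j := by
    intro b
    rw [val, Finset.range_eq_Ico,
      ← Finset.sum_Ico_consecutive _ (Nat.zero_le (mIdx n x)) hm, ← Finset.range_eq_Ico]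
    congr 1
    conv_lhs => rw [show mIdx n x = (mIdx n x - 1) + 1 by omega]
    rw [Finset.sum_range_succ]
  rw [hsplit (Be n (Phi n x)), hsplit (Be n x)]
  have hH : ∑ j ∈ Finset.Ico (mIdx n x) n, (if Be n (Phi n x) j then 1 else 0) * 2 ^ j
      = ∑ j ∈ Finset.Ico (mIdx n x) n, (if Be n x j then 1 else 0) * 2 ^ j := by
    refine Finset.sum_congr rfl fun j hj => ?_
    rw [Be_phi_keep x j (Finset.mem_Ico.mp hj).1]
  have hP : ∑ j ∈ Finset.range (mIdx n x - 1), (if Be n x j then 1 else 0) * 2 ^ j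
      = 2 ^ (mIdx n x - 1) - 1 := by
    rw [← two_pow_sum (mIdx n x - 1)]
    refine Finset.sum_congr rfl fun j hj => ?_
    have hj' : j < mIdx n x - 1 := Finset.mem_range.mp hj
    rw [Be_ones x hn j (by omega)]
    simp
  have hP' : ∑ j ∈ Finset.range (mIdx n x - 1), (if Be n (Phi n x) j then 1 else 0) * 2 ^ j
      = 0 := by
    refine Finset.sum_eq_zero fun j hj => ?_
    have hj' : j < mIdx n x - 1 := Finset.mem_range.mp hj
    rw [Be_phi_flip x hn j (by omega), Be_ones x hn j (by omega)]
    simp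
  rw [hH, hP, hP']
  have hflip1 : Be n (Phi n x) (mIdx n x - 1) = ! Be n x (mIdx n x - 1) :=
    Be_phi_flip x hn _ (by omega)
  have hpow1 : 1 ≤ 2 ^ (mIdx n x - 1) := Nat.one_le_two_pow
  have hval := val_lt n (Be n (Phi n x))
  rw [hsplit (Be n (Phi n x)), hH, hP', hflip1] at hval
  rw [hflip1]
  by_cases hmn : mIdx n x < n
  · have hb : Be n x (mIdx n x - 1) = false := Be_break x hn hmn
    rw [hb] at hval ⊢
    set H := ∑ j ∈ Finset.Ico (mIdx n x) n, (if Be n x j = true then 1 else 0) * 2 ^ j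
      with hHdef
    norm_num at hval ⊢
    refine succ_mod_helper hval ?_
    omega
  · have hmn' : mIdx n x = n := by omega
    have hIco : Finset.Ico (mIdx n x) n = ∅ := by simp [hmn']
    rw [hIco, Finset.sum_empty] at hval ⊢
    have h2 : (2 : ℕ) ^ n = 2 ^ (n - 1) * 2 := by
      rw [← pow_succ]; congr 1; omega
    have hpow2 : 1 ≤ 2 ^ (n - 1) := Nat.one_le_two_pow
    have he : mIdx n x - 1 = n - 1 := by omega
    rw [he] at hval ⊢
    cases hb : Be n x (n - 1)
    · rw [hb] at hval
      norm_num at hval ⊢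
      refine succ_mod_helper hval ?_
      omega
    · norm_num
      refine succ_mod_helper (show (0:ℕ) < 2 ^ n by positivity) ?_
      omega

lemma rmap_zero {n : ℕ} : rmap n (fun _ => false) = 0 := by
  rw [rmap]
  refine Finset.sum_eq_zero fun j _ => ?_
  have : cbit n (fun _ => false) j = false := by
    rw [cbit]
    by_cases h : (j : ℕ) + 1 < n
    · rw [dif_pos h]; simp
    · rw [dif_neg h]
  rw [this]
  simp

lemma rmap_iter {n : ℕ} (hn : 0 < n) (s : Fin n → Bool) :
    ∀ t : ℕ, rmap n ((Phi n)^[t] s) = (rmap n s + t) % 2 ^ n := by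
  intro t
  induction t with
  | zero => simp [Nat.mod_eq_of_lt (rmap_lt s)]
  | succ t ih =>
    rw [Function.iterate_succ_apply', rmap_phi hn, ih, Nat.mod_add_mod, ← Nat.add_assoc]

end MP

/-- For every positive `n` there is a McCulloch–Pitts network on `n` neurons
(each coordinate a linear threshold function with integer weights and thresholds)
with period `2ⁿ`; in particular every state occurs in the orbit of `(0,…,0)`. -/
theorem exists_threshold_network_full_period (n : ℕ) (hn : 0 < n) :
    ∃ Φ : (Fin n → Bool) → (Fin n → Bool),
      (∃ (w : Fin n → Fin n → ℤ) (θ : Fin n → ℤ),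
        ∀ x : Fin n → Bool, ∀ i : Fin n,
          (Φ x i = true ↔ θ i ≤ ∑ j : Fin n, w i j * (if x j then 1 else 0))) ∧
      IsLeast {t : ℕ | 0 < t ∧ ∃ s : Fin n → Bool, Φ^[t] s = s} (2 ^ n) ∧
      ∀ y : Fin n → Bool, ∃ t : ℕ, Φ^[t] (fun _ => false) = y := by
  refine ⟨Phi n,
    ⟨fun i j => MP.W n (i : ℕ) (j : ℕ), fun i => MP.TH n (i : ℕ),
      fun x i => MP.phi_iff hn x i⟩, ⟨⟨by positivity, fun _ => false, ?_⟩, ?_⟩, ?_⟩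
  · apply MP.rmap_inj
    rw [MP.rmap_iter hn, Nat.add_mod_right, Nat.mod_eq_of_lt (MP.rmap_lt _)]
  · rintro t ⟨ht, s, hs⟩
    have h1 := MP.rmap_iter hn s t
    rw [hs] at h1
    have hlt := MP.rmap_lt s
    have h3 : rmap n s % 2 ^ n = (rmap n s + t) % 2 ^ n := by
      rw [Nat.mod_eq_of_lt hlt]; exact h1
    have hdvd := (Nat.modEq_iff_dvd' (by omega)).1 h3
    rw [Nat.add_sub_cancel_left] at hdvd
    exact Nat.le_of_dvd ht hdvd
  · intro y
    refine ⟨rmap n y, MP.rmap_inj _ _ ?_⟩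
    rw [MP.rmap_iter hn, MP.rmap_zero, Nat.zero_add, Nat.mod_eq_of_lt (MP.rmap_lt _)]
end

section
/- With the weights w_{n,i,j} and thresholds θ_{n,i} defined recursively as in the construction, for all n ≥ 1 and all i = 1,…,n: Σ_{j ≢ n mod 2} w_{n,i,j} = θ_{n,i} and Σ_{j ≡ n mod 2} w_{n,i,j} = θ_{n,i} − 1. -/
lemma Icc_succ_split (n : ℕ) : Finset.Icc 1 (n+1) = insert (n+1) (Finset.Icc 1 n) := by
  ext j; simp [Finset.mem_Icc]; omega

lemma split_pos (p : ℕ → Prop) [DecidablePred p] (f : ℕ → ℤ) (n : ℕ) (hp : p (n+1)) :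
    ∑ j ∈ (Finset.Icc 1 (n+1)).filter p, f j
      = (∑ j ∈ (Finset.Icc 1 n).filter p, f j) + f (n+1) := by
  rw [Icc_succ_split, Finset.filter_insert, if_pos hp,
    Finset.sum_insert (by simp [Finset.mem_Icc])]
  ring

lemma split_neg (p : ℕ → Prop) [DecidablePred p] (f : ℕ → ℤ) (n : ℕ) (hp : ¬ p (n+1)) :
    ∑ j ∈ (Finset.Icc 1 (n+1)).filter p, f j
      = ∑ j ∈ (Finset.Icc 1 n).filter p, f j := by
  rw [Icc_succ_split, Finset.filter_insert, if_neg hp]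

lemma Icc_split2 (n : ℕ) :
    Finset.Icc 1 (n+2) = insert (n+2) (insert (n+1) (Finset.Icc 1 n)) := by
  ext j; simp [Finset.mem_Icc]; omega

lemma split_tf (p : ℕ → Prop) [DecidablePred p] (f : ℕ → ℤ) (n : ℕ)
    (h2 : p (n+2)) (h1 : ¬ p (n+1)) :
    ∑ j ∈ (Finset.Icc 1 (n+2)).filter p, f j
      = (∑ j ∈ (Finset.Icc 1 n).filter p, f j) + f (n+2) := by
  rw [Icc_split2, Finset.filter_insert, if_pos h2, Finset.filter_insert, if_neg h1,
    Finset.sum_insert (by simp [Finset.mem_Icc])]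
  ring

lemma split_ft (p : ℕ → Prop) [DecidablePred p] (f : ℕ → ℤ) (n : ℕ)
    (h2 : ¬ p (n+2)) (h1 : p (n+1)) :
    ∑ j ∈ (Finset.Icc 1 (n+2)).filter p, f j
      = (∑ j ∈ (Finset.Icc 1 n).filter p, f j) + f (n+1) := by
  rw [Icc_split2, Finset.filter_insert, if_neg h2, Finset.filter_insert, if_pos h1,
    Finset.sum_insert (by
      simp only [Finset.mem_filter, Finset.mem_Icc]
      rintro ⟨⟨_, h⟩, _⟩; omega)]
  ring

lemma filter_eq_of (s : Finset ℕ) (p q : ℕ → Prop) [DecidablePred p] [DecidablePred q]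
    (h : ∀ j, p j ↔ q j) : s.filter p = s.filter q := by
  ext j; simp [Finset.mem_filter, h j]

lemma card_parity (n : ℕ) :
    (((Finset.Icc 1 n).filter (fun j => j % 2 = n % 2)).card = (n+1)/2) ∧
    (((Finset.Icc 1 n).filter (fun j => j % 2 ≠ n % 2)).card = n/2) := by
  induction n with
  | zero => simp
  | succ n ih =>
    obtain ⟨h1, h2⟩ := ih
    constructor
    · rw [Icc_succ_split, Finset.filter_insert, if_pos (by omega),
        Finset.card_insert_of_notMem (by simp [Finset.mem_Icc]),
        filter_eq_of _ _ (fun j => j % 2 ≠ n % 2) (fun j => by omega)]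
      omega
    · rw [Icc_succ_split, Finset.filter_insert, if_neg (by omega),
        filter_eq_of _ _ (fun j => j % 2 = n % 2) (fun j => by omega)]
      omega


section evals
variable (n i j : ℕ)

lemma wgt_nn_ne (h : j < n+2) (hp : j % 2 ≠ (n+2) % 2) : wgt (n+2) (n+2) j = 1 := by
  simp only [wgt]; split_ifs <;> first | rfl | omega | (exfalso; omega) | simp_all

lemma wgt_nn_eq (h : j < n+2) (hp : j % 2 = (n+2) % 2) : wgt (n+2) (n+2) j = -1 := by
  simp only [wgt]; split_ifs <;> first | rfl | omega | (exfalso; omega) | simp_all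

lemma wgt_nn_top : wgt (n+2) (n+2) (n+2) = (n : ℤ) := by
  simp only [wgt]; split_ifs <;> first | rfl | omega | (exfalso; omega) | simp_all

lemma wgt_n1_lt (h : j ≤ n) : wgt (n+2) (n+1) j = wgt (n+1) (n+1) j := by
  simp only [wgt]; split_ifs <;> first | rfl | omega | (exfalso; omega) | simp_all

lemma wgt_n1_mid : wgt (n+2) (n+1) (n+1) = wgt (n+1) (n+1) (n+1) + 1 := by
  simp only [wgt]; split_ifs <;> first | rfl | omega | (exfalso; omega) | simp_all

lemma wgt_n1_top : wgt (n+2) (n+1) (n+2) = -1 := by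
  simp only [wgt]; split_ifs <;> first | rfl | omega | (exfalso; omega) | simp_all

lemma wgt_lo_lt (hi : i ≤ n) (hj : j ≤ n) : wgt (n+2) i j = wgt (n+1) i j + wgt n i j := by
  simp only [wgt]; split_ifs <;> first | rfl | omega | (exfalso; omega) | simp_all

lemma wgt_lo_mid (hi : i ≤ n) : wgt (n+2) i (n+1) = wgt (n+1) i (n+1) := by
  simp only [wgt]; split_ifs <;> first | rfl | omega | (exfalso; omega) | simp_all

lemma wgt_lo_top (hi : i ≤ n) : wgt (n+2) i (n+2) = -1 := by
  simp only [wgt]; split_ifs <;> first | rfl | omega | (exfalso; omega) | simp_all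

lemma thr_top : thr (n+2) (n+2) = (((n+2)/2 : ℕ) : ℤ) := by
  simp only [thr]; split_ifs <;> first | rfl | omega | (exfalso; omega) | simp_all

lemma thr_mid : thr (n+2) (n+1) = thr (n+1) (n+1) := by
  simp only [thr]; split_ifs <;> first | rfl | omega | (exfalso; omega) | simp_all

lemma thr_lo (hi : i ≤ n) : thr (n+2) i = thr (n+1) i + thr n i - 1 := by
  simp only [thr]; split_ifs <;> first | rfl | omega | (exfalso; omega) | simp_all

end evals

lemma wgt_parity_aux (n : ℕ) : ∀ i : ℕ, 1 ≤ n → 1 ≤ i → i ≤ n →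
    (∑ j ∈ (Finset.Icc 1 n).filter (fun j => j % 2 ≠ n % 2), wgt n i j) = thr n i ∧
    (∑ j ∈ (Finset.Icc 1 n).filter (fun j => j % 2 = n % 2), wgt n i j) =
      thr n i - 1 := by
  induction n using Nat.strong_induction_on with
  | _ n IH =>
  intro i hn hi hin
  match n, hn with
  | 1, _ =>
    norm_num [show Finset.Icc 1 1 = {1} from rfl, Finset.filter_singleton, wgt, thr]
  | (n+2), _ =>
    rcases eq_or_lt_of_le hin with h2 | h2
    · -- i = n+2
      subst h2
      constructor
      · rw [Finset.sum_congr rfl (fun j hj => by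
          simp only [Finset.mem_filter, Finset.mem_Icc] at hj
          exact wgt_nn_ne n j (by omega) hj.2),
          Finset.sum_const, (card_parity (n+2)).2, thr_top, nsmul_eq_mul, mul_one]
      · rw [split_tf _ _ n (by omega) (by omega),
          Finset.sum_congr rfl (fun j hj => by
            simp only [Finset.mem_filter, Finset.mem_Icc] at hj
            exact wgt_nn_eq n j (by omega) hj.2),
          Finset.sum_const, filter_eq_of _ _ (fun j => j % 2 = n % 2) (fun j => by omega),
          (card_parity n).1, wgt_nn_top, thr_top]
        simp only [nsmul_eq_mul, mul_neg, mul_one]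
        push_cast
        omega
    · -- i ≤ n+1
      have hin' : i ≤ n + 1 := by omega
      rcases eq_or_lt_of_le hin' with h1 | h1
      · -- i = n+1
        subst h1
        obtain ⟨A, B⟩ := IH (n+1) (by omega) (n+1) (by omega) (by omega) (le_refl _)
        rw [split_neg _ _ n (by omega)] at A
        rw [split_pos _ _ n (by omega)] at B
        constructor
        · rw [split_ft _ _ n (by omega) (by omega),
            Finset.sum_congr rfl (fun j hj => by
              simp only [Finset.mem_filter, Finset.mem_Icc] at hj
              exact wgt_n1_lt n j hj.1.2),
            filter_eq_of _ _ (fun j => j % 2 = (n+1) % 2) (fun j => by omega),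
            wgt_n1_mid, thr_mid]
          linarith
        · rw [split_tf _ _ n (by omega) (by omega),
            Finset.sum_congr rfl (fun j hj => by
              simp only [Finset.mem_filter, Finset.mem_Icc] at hj
              exact wgt_n1_lt n j hj.1.2),
            filter_eq_of _ _ (fun j => j % 2 ≠ (n+1) % 2) (fun j => by omega),
            wgt_n1_top, thr_mid]
          linarith
      · -- i ≤ n
        have hiN : i ≤ n := by omega
        have hn1 : 1 ≤ n := le_trans hi hiN
        obtain ⟨A1, B1⟩ := IH (n+1) (by omega) i (by omega) hi (by omega)
        obtain ⟨A0, B0⟩ := IH n (by omega) i hn1 hi hiN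
        rw [split_neg _ _ n (by omega)] at A1
        rw [split_pos _ _ n (by omega)] at B1
        have ew : ∀ j ∈ (Finset.Icc 1 n), wgt (n+2) i j = wgt (n+1) i j + wgt n i j := by
          intro j hj
          simp only [Finset.mem_Icc] at hj
          exact wgt_lo_lt n i j hiN hj.2
        constructor
        · rw [split_ft _ _ n (by omega) (by omega),
            Finset.sum_congr rfl (fun j hj => ew j (Finset.mem_of_mem_filter j hj)),
            Finset.sum_add_distrib,
            filter_eq_of _ _ (fun j => j % 2 = (n+1) % 2) (fun j => by omega),
            wgt_lo_mid n i hiN, thr_lo n i hiN]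
          have e2 : (∑ j ∈ (Finset.Icc 1 n).filter (fun j => j % 2 = (n+1) % 2), wgt n i j)
              = ∑ j ∈ (Finset.Icc 1 n).filter (fun j => j % 2 ≠ n % 2), wgt n i j := by
            rw [filter_eq_of _ _ (fun j => j % 2 ≠ n % 2) (fun j => by omega)]
          rw [e2]
          linarith
        · rw [split_tf _ _ n (by omega) (by omega),
            Finset.sum_congr rfl (fun j hj => ew j (Finset.mem_of_mem_filter j hj)),
            Finset.sum_add_distrib,
            filter_eq_of _ _ (fun j => j % 2 ≠ (n+1) % 2) (fun j => by omega),
            wgt_lo_top n i hiN, thr_lo n i hiN]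
          have e2 : (∑ j ∈ (Finset.Icc 1 n).filter (fun j => j % 2 ≠ (n+1) % 2), wgt n i j)
              = ∑ j ∈ (Finset.Icc 1 n).filter (fun j => j % 2 = n % 2), wgt n i j := by
            rw [filter_eq_of _ _ (fun j => j % 2 = n % 2) (fun j => by omega)]
          rw [e2]
          linarith


/-- The parity sums of the recursively defined weights:
`Σ_{j ≢ n mod 2} w_{n,i,j} = θ_{n,i}` and `Σ_{j ≡ n mod 2} w_{n,i,j} = θ_{n,i} - 1`. -/
theorem wgt_parity_sums (n i : ℕ) (hn : 1 ≤ n) (hi : 1 ≤ i) (hin : i ≤ n) :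
    (∑ j ∈ (Finset.Icc 1 n).filter (fun j => j % 2 ≠ n % 2), wgt n i j) = thr n i ∧
    (∑ j ∈ (Finset.Icc 1 n).filter (fun j => j % 2 = n % 2), wgt n i j) =
      thr n i - 1 := wgt_parity_aux n i hn hi hin
end

section
/- For all n ≥ 1 and i = 1,…,n, Σ_{j=1}^n w_{n,i,j} = 2θ_{n,i} − 1, and consequently each threshold function f_{n,i}(x) = H(Σ_j w_{n,i,j} x_j − θ_{n,i}) satisfies f_{n,i}(x̄) = 1 − f_{n,i}(x) for all x ∈ {0,1}^n, where x̄ is the bitwise complement of x. -/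
lemma wgt3 (n i j : ℕ) : wgt (n+3) i j =
    if i = n + 3 then
      (if j = n + 3 then ((n+1 : ℕ) : ℤ)
       else if j % 2 = (n + 3) % 2 then -1 else 1)
    else if i = n + 2 then
      (if j = n + 3 then -1
       else if j = n + 2 then wgt (n+2) (n+2) j + 1
       else wgt (n+2) (n+2) j)
    else
      (if j = n + 3 then -1
       else if j = n + 2 then wgt (n+2) i j
       else wgt (n+2) i j + wgt (n+1) i j) := rfl

lemma thr3 (n i : ℕ) : thr (n+3) i =
    if i = n + 3 then (((n + 3) / 2 : ℕ) : ℤ)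
    else if i = n + 2 then thr (n+2) (n+2)
    else thr (n+2) i + thr (n+1) i - 1 := rfl

lemma altsum (p : ℕ) (hp : p < 2) (m : ℕ) :
    ∑ j ∈ Finset.Icc 1 m, (if j % 2 = p then (-1:ℤ) else 1)
      = if p = 1 then -((m % 2 : ℕ) : ℤ) else ((m % 2 : ℕ) : ℤ) := by
  induction m with
  | zero => simp
  | succ m ih =>
    rw [Finset.sum_Icc_succ_top (by omega : 1 ≤ m + 1), ih]
    interval_cases p <;>
      rcases Nat.mod_two_eq_zero_or_one m with h | h <;>
      simp [Nat.add_mod, h]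

lemma sum_wgt : ∀ n, ∀ i, 1 ≤ i → i ≤ n →
    (∑ j ∈ Finset.Icc 1 n, wgt n i j) = 2 * thr n i - 1 := by
  intro n
  induction n using Nat.strong_induction_on with
  | _ n ih =>
    match n with
    | 0 => intro i h1 h2; omega
    | 1 =>
      intro i h1 h2
      simp [wgt, thr]
    | 2 =>
      intro i h1 h2
      interval_cases i <;> simp [show Finset.Icc 1 2 = {1, 2} by decide, wgt, thr]
    | (n+3) =>
      intro i h1 h2
      rw [Finset.sum_Icc_succ_top (by omega : 1 ≤ n + 3),
          Finset.sum_Icc_succ_top (by omega : 1 ≤ n + 2)]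
      rcases eq_or_lt_of_le h2 with he | hlt
      · -- i = n+3
        subst he
        have hc : ∀ j ∈ Finset.Icc 1 (n+1), wgt (n+3) (n+3) j
            = (if j % 2 = (n+3) % 2 then (-1:ℤ) else 1) := by
          intro j hj
          simp only [Finset.mem_Icc] at hj
          rw [wgt3, if_pos rfl, if_neg (by omega)]
        rw [Finset.sum_congr rfl hc,
            altsum ((n+3) % 2) (Nat.mod_lt _ (by omega)) (n+1)]
        have hw2 : wgt (n+3) (n+3) (n+2)
            = (if (n+2) % 2 = (n+3) % 2 then (-1:ℤ) else 1) := by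
          rw [wgt3, if_pos rfl, if_neg (by omega)]
        have hw3 : wgt (n+3) (n+3) (n+3) = ((n+1 : ℕ) : ℤ) := by
          rw [wgt3, if_pos rfl, if_pos rfl]
        have ht : thr (n+3) (n+3) = (((n+3)/2 : ℕ) : ℤ) := by
          rw [thr3, if_pos rfl]
        rw [hw2, hw3, ht]
        rcases Nat.mod_two_eq_zero_or_one n with h | h
        · rw [if_pos (by omega : (n+3) % 2 = 1), if_neg (by omega : ¬ (n+2) % 2 = (n+3) % 2)]
          omega
        · rw [if_neg (by omega : ¬ (n+3) % 2 = 1), if_neg (by omega : ¬ (n+2) % 2 = (n+3) % 2)]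
          omega
      · -- i ≤ n+2
        have h2' : i ≤ n + 2 := by omega
        rcases eq_or_lt_of_le h2' with he | hlt'
        · -- i = n+2
          subst he
          have hc : ∀ j ∈ Finset.Icc 1 (n+1), wgt (n+3) (n+2) j = wgt (n+2) (n+2) j := by
            intro j hj
            simp only [Finset.mem_Icc] at hj
            rw [wgt3, if_neg (by omega), if_pos rfl, if_neg (by omega), if_neg (by omega)]
          rw [show (∑ j ∈ Finset.Icc 1 (n+1), wgt (n+3) (n+2) j)
              = ∑ j ∈ Finset.Icc 1 (n+1), wgt (n+2) (n+2) j from Finset.sum_congr rfl hc]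
          have hw2 : wgt (n+3) (n+2) (n+2) = wgt (n+2) (n+2) (n+2) + 1 := by
            rw [wgt3, if_neg (by omega), if_pos rfl, if_neg (by omega), if_pos rfl]
          have hw3 : wgt (n+3) (n+2) (n+3) = -1 := by
            rw [wgt3, if_neg (by omega), if_pos rfl, if_pos rfl]
          have ht : thr (n+3) (n+2) = thr (n+2) (n+2) := by
            rw [thr3, if_neg (by omega), if_pos rfl]
          have ihs := ih (n+2) (by omega) (n+2) (by omega) le_rfl
          rw [Finset.sum_Icc_succ_top (by omega : 1 ≤ n + 2)] at ihs
          rw [show n+1+1 = n+2 from rfl] at ihs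
          rw [hw2, hw3, ht]
          omega
        · -- i ≤ n+1
          have hle : i ≤ n + 1 := by omega
          have hc : ∀ j ∈ Finset.Icc 1 (n+1),
              wgt (n+3) i j = wgt (n+2) i j + wgt (n+1) i j := by
            intro j hj
            simp only [Finset.mem_Icc] at hj
            rw [wgt3, if_neg (by omega), if_neg (by omega), if_neg (by omega),
                if_neg (by omega)]
          rw [Finset.sum_congr rfl hc, Finset.sum_add_distrib]
          have hw2 : wgt (n+3) i (n+2) = wgt (n+2) i (n+2) := by
            rw [wgt3, if_neg (by omega), if_neg (by omega), if_neg (by omega), if_pos rfl]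
          have hw3 : wgt (n+3) i (n+3) = -1 := by
            rw [wgt3, if_neg (by omega), if_neg (by omega), if_pos rfl]
          have ht : thr (n+3) i = thr (n+2) i + thr (n+1) i - 1 := by
            rw [thr3, if_neg (by omega), if_neg (by omega)]
          have ih2 := ih (n+2) (by omega) i h1 (by omega)
          have ih1 := ih (n+1) (by omega) i h1 hle
          rw [Finset.sum_Icc_succ_top (by omega : 1 ≤ n + 2)] at ih2
          rw [show n+1+1 = n+2 from rfl] at ih2
          rw [hw2, hw3, ht]
          omega


/-- `Σ_{j=1}^n w_{n,i,j} = 2θ_{n,i} - 1`, and consequently the threshold function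
`f_{n,i}` satisfies `f_{n,i}(x̄) = 1 - f_{n,i}(x)` for all `x ∈ {0,1}ⁿ`. -/
theorem wgt_sum_antisymmetric (n i : ℕ) (hn : 1 ≤ n) (hi : 1 ≤ i) (hin : i ≤ n) :
    (∑ j ∈ Finset.Icc 1 n, wgt n i j) = 2 * thr n i - 1 ∧
    ∀ x : Fin n → Bool,
      (thr n i ≤ ∑ j : Fin n, wgt n i ((j : ℕ) + 1) * (if !(x j) then 1 else 0) ↔
        ¬ thr n i ≤ ∑ j : Fin n, wgt n i ((j : ℕ) + 1) * (if x j then 1 else 0)) := by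
  have hS := sum_wgt n i hi hin
  have hconv : (∑ j : Fin n, wgt n i ((j : ℕ) + 1)) = ∑ j ∈ Finset.Icc 1 n, wgt n i j := by
    rw [Fin.sum_univ_eq_sum_range (fun j => wgt n i (j + 1)) n,
        show Finset.Icc 1 n = Finset.Ico 1 (n+1) from (Finset.Ico_add_one_right_eq_Icc 1 n).symm,
        Finset.sum_Ico_eq_sum_range]
    simp [add_comm]
  refine ⟨hS, fun x => ?_⟩
  have key : (∑ j : Fin n, wgt n i ((j : ℕ) + 1) * (if !(x j) then 1 else 0))
      = (2 * thr n i - 1) - ∑ j : Fin n, wgt n i ((j : ℕ) + 1) * (if x j then 1 else 0) := by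
    rw [eq_sub_iff_add_eq, ← Finset.sum_add_distrib]
    have h1 : ∀ j : Fin n, wgt n i ((j : ℕ) + 1) * (if !(x j) then 1 else 0)
        + wgt n i ((j : ℕ) + 1) * (if x j then 1 else 0) = wgt n i ((j : ℕ) + 1) := by
      intro j; cases x j <;> simp
    rw [Finset.sum_congr rfl (fun j _ => h1 j), hconv, hS]
  rw [key]
  set t := ∑ j : Fin n, wgt n i ((j : ℕ) + 1) * (if x j then 1 else 0)
  constructor
  · intro h hc; omega
  · intro h; omega
end

section
/- For every x ∈ {0,1}^n, if x_1 = Φ_n(x)_1 then Φ_n(x)_1 ≠ Φ_n^2(x)_1. -/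
/-- For every `x ∈ {0,1}ⁿ`: if `x₁ = Φₙ(x)₁` then `Φₙ(x)₁ ≠ Φₙ²(x)₁`. -/
theorem Phi_first_bit (n : ℕ) (hn : 0 < n) (x : Fin n → Bool)
    (h : x ⟨0, hn⟩ = Phi n x ⟨0, hn⟩) :
    Phi n x ⟨0, hn⟩ ≠ Phi n (Phi n x) ⟨0, hn⟩ := by
  have hm_le : mIdx n x ≤ n := Nat.findGreatest_le n
  have h1 : AltPrefix n x 1 := fun j hj _ => absurd hj (by omega)
  have hm1 : 1 ≤ mIdx n x := Nat.le_findGreatest hn h1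
  have h0 : Phi n x ⟨0, hn⟩ = ! x ⟨mIdx n x - 1, by omega⟩ := by
    show dite _ _ _ = _
    rw [dif_pos (show (0:ℕ) < mIdx n x by omega)]
  have hm2 : 2 ≤ mIdx n x := by
    by_contra hc
    have hme : mIdx n x = 1 := by omega
    rw [h0] at h
    simp only [hme] at h
    simp at h
  have hn2 : 2 ≤ n := le_trans hm2 hm_le
  set y := Phi n x with hy
  have hy0 : y ⟨0, hn⟩ = ! x ⟨mIdx n x - 1, by omega⟩ := h0
  have hy1 : y ⟨1, by omega⟩ = ! x ⟨mIdx n x - 1, by omega⟩ := by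
    show dite _ _ _ = _
    rw [dif_pos (show (1:ℕ) < mIdx n x by omega)]
  have hys : AltPrefix n y 1 := fun j hj _ => absurd hj (by omega)
  have hmy1 : 1 ≤ mIdx n y := Nat.le_findGreatest hn hys
  have hmy : mIdx n y = 1 := by
    by_contra hc
    have h2 : 2 ≤ mIdx n y := by omega
    have hspec : AltPrefix n y (mIdx n y) := Nat.findGreatest_spec hn hys
    have := hspec 0 (by omega) (by omega)
    rw [hy0, hy1] at this
    exact this rfl
  have hfin : Phi n y ⟨0, hn⟩ = ! y ⟨0, hn⟩ := by
    show dite _ _ _ = _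
    rw [dif_pos (show (0:ℕ) < mIdx n y by omega)]
    congr 1
    exact congrArg y (Fin.ext (by simp [hmy]))
  rw [hfin, hy0]
  simp
end
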